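/- arXiv:2005.12437 — 8 statements merged into one kernel-verified Lean document; each statement's English description precedes it below -/
import Mathlib

section
/- For every 0 ≤ i ≤ n, ker 𝒜^i = ran 𝒜^{i−1} + { (h + l^i(S^i h̃), h̃) : h ∈ H^i, h̃ ∈ H̃^i, S^i h̃ ∈ ran D^i } as a sum of subsets of Y^i (here l^i(S^i h̃) is well defined since S^i h̃ ∈ ran D^i). -/
/-!
STATEMENT 6: for every `0 ≤ i ≤ n`,
`ker 𝒜^i = ran 𝒜^{i-1} + { (h + l^i(S^i ht), ht) : h ∈ H^i, ht ∈ H̃^i, S^i ht ∈ ran D^i }`,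
where `𝒜^i(ω,μ) = (D^i ω − S^i μ, D̃^i μ)` is the differential of the twisted complex on
`Y^i = Z^i × Z̃^i`.  The position `i = 0` (where `ran 𝒜^{-1} = 0`) and the positions
`i = m + 1` are stated separately.
-/

noncomputable section

/-- The twisted differential `𝒜^i(ω, μ) = (D^i ω − S^i μ, D̃^i μ)`. -/
def twistA {Z Zt : ℕ → Type*}
    [∀ i, NormedAddCommGroup (Z i)] [∀ i, InnerProductSpace ℝ (Z i)]
    [∀ i, NormedAddCommGroup (Zt i)] [∀ i, InnerProductSpace ℝ (Zt i)]
    (D : ∀ i, Z i →L[ℝ] Z (i + 1)) (Dt : ∀ i, Zt i →L[ℝ] Zt (i + 1))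
    (S : ∀ i, Zt i →L[ℝ] Z (i + 1)) (i : ℕ) :
    (Z i × Zt i) →L[ℝ] (Z (i + 1) × Zt (i + 1)) :=
  ((D i).comp (ContinuousLinearMap.fst ℝ (Z i) (Zt i))
      - (S i).comp (ContinuousLinearMap.snd ℝ (Z i) (Zt i))).prod
    ((Dt i).comp (ContinuousLinearMap.snd ℝ (Z i) (Zt i)))

theorem stmt_6
    (n : ℕ) (hn : 1 ≤ n)
    {Z Zt : ℕ → Type*}
    [∀ i, NormedAddCommGroup (Z i)] [∀ i, InnerProductSpace ℝ (Z i)] [∀ i, CompleteSpace (Z i)]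
    [∀ i, NormedAddCommGroup (Zt i)] [∀ i, InnerProductSpace ℝ (Zt i)] [∀ i, CompleteSpace (Zt i)]
    (D : ∀ i, Z i →L[ℝ] Z (i + 1)) (Dt : ∀ i, Zt i →L[ℝ] Zt (i + 1))
    (S : ∀ i, Zt i →L[ℝ] Z (i + 1))
    (hDD : ∀ i (x : Z i), D (i + 1) (D i x) = 0)
    (hDtDt : ∀ i (x : Zt i), Dt (i + 1) (Dt i x) = 0)
    (hDtop : ∀ i, n ≤ i → D i = 0) (hDttop : ∀ i, n ≤ i → Dt i = 0)
    (hStop : ∀ i, n ≤ i → S i = 0)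
    (hanti : ∀ i (x : Zt i), S (i + 1) (Dt i x) = -D (i + 1) (S i x))
    -- the cohomology representatives `H^i`, `H̃^i`:
    (Hs : ∀ i, Submodule ℝ (Z i)) (Hst : ∀ i, Submodule ℝ (Zt i))
    (hH0 : LinearMap.ker (D 0 : Z 0 →ₗ[ℝ] Z (0 + 1)) = ⊥ ⊔ Hs 0 ∧ Disjoint (⊥ : Submodule ℝ (Z 0)) (Hs 0))
    (hH : ∀ m, m + 1 ≤ n →
      LinearMap.ker (D (m + 1) : Z (m + 1) →ₗ[ℝ] Z (m + 1 + 1)) = LinearMap.range (D m : Z m →ₗ[ℝ] Z (m + 1)) ⊔ Hs (m + 1)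
        ∧ Disjoint (LinearMap.range (D m : Z m →ₗ[ℝ] Z (m + 1))) (Hs (m + 1)))
    (hHt0 : LinearMap.ker (Dt 0 : Zt 0 →ₗ[ℝ] Zt (0 + 1)) = ⊥ ⊔ Hst 0 ∧ Disjoint (⊥ : Submodule ℝ (Zt 0)) (Hst 0))
    (hHt : ∀ m, m + 1 ≤ n →
      LinearMap.ker (Dt (m + 1) : Zt (m + 1) →ₗ[ℝ] Zt (m + 1 + 1)) = LinearMap.range (Dt m : Zt m →ₗ[ℝ] Zt (m + 1)) ⊔ Hst (m + 1)
        ∧ Disjoint (LinearMap.range (Dt m : Zt m →ₗ[ℝ] Zt (m + 1))) (Hst (m + 1)))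
    -- the complements `W^i` of `ker D^i` in `Z^i`:
    (Ws : ∀ i, Submodule ℝ (Z i))
    (hW : ∀ i, i ≤ n → (⊤ : Submodule ℝ (Z i)) = LinearMap.ker (D i : Z i →ₗ[ℝ] Z (i + 1)) ⊔ Ws i
        ∧ Disjoint (LinearMap.ker (D i : Z i →ₗ[ℝ] Z (i + 1))) (Ws i))
    -- the inverse `l^i : ran D^i → W^i` of `D^i : W^i → ran D^i`:
    (l : ∀ i, ↥(LinearMap.range (D i : Z i →ₗ[ℝ] Z (i + 1))) →ₗ[ℝ] Z i)
    (hlW : ∀ i (v : ↥(LinearMap.range (D i : Z i →ₗ[ℝ] Z (i + 1)))), l i v ∈ Ws i)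
    (hlD : ∀ i (v : ↥(LinearMap.range (D i : Z i →ₗ[ℝ] Z (i + 1)))), D i (l i v) = (v : Z (i + 1))) :
    -- at position `0`:
    ((∀ y : Z 0 × Zt 0, twistA D Dt S 0 y = 0 ↔
        ∃ h ∈ Hs 0, ∃ ht ∈ Hst 0, ∃ hm : S 0 ht ∈ LinearMap.range (D 0 : Z 0 →ₗ[ℝ] Z (0 + 1)),
          y = (h + l 0 ⟨S 0 ht, hm⟩, ht)) ∧
    -- at positions `i = m + 1 ≤ n`:
      (∀ m, m + 1 ≤ n → ∀ y : Z (m + 1) × Zt (m + 1),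
        twistA D Dt S (m + 1) y = 0 ↔
          ∃ x : Z m × Zt m, ∃ h ∈ Hs (m + 1), ∃ ht ∈ Hst (m + 1),
            ∃ hm : S (m + 1) ht ∈ LinearMap.range (D (m + 1) : Z (m + 1) →ₗ[ℝ] Z (m + 1 + 1)),
              y = twistA D Dt S m x + (h + l (m + 1) ⟨S (m + 1) ht, hm⟩, ht))) := by
  have key : ∀ i (y : Z i × Zt i), twistA D Dt S i y = 0 ↔
      D i y.1 = S i y.2 ∧ Dt i y.2 = 0 := by
    intro i y
    simp [twistA, Prod.ext_iff, sub_eq_zero]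
  constructor
  · intro y
    rw [key]
    constructor
    · rintro ⟨hDω, hDtμ⟩
      have hμ : y.2 ∈ Hst 0 := by
        have h2 : y.2 ∈ LinearMap.ker (Dt 0 : Zt 0 →ₗ[ℝ] Zt (0 + 1)) := hDtμ
        rwa [hHt0.1, bot_sup_eq] at h2
      have hm : S 0 y.2 ∈ LinearMap.range (D 0 : Z 0 →ₗ[ℝ] Z (0 + 1)) := ⟨y.1, hDω⟩
      refine ⟨y.1 - l 0 ⟨S 0 y.2, hm⟩, ?_, y.2, hμ, hm, ?_⟩
      · have h2 : y.1 - l 0 ⟨S 0 y.2, hm⟩ ∈ LinearMap.ker (D 0 : Z 0 →ₗ[ℝ] Z (0 + 1)) := by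
          simp [LinearMap.mem_ker, map_sub, hDω, hlD]
        rwa [hH0.1, bot_sup_eq] at h2
      · ext <;> simp
    · rintro ⟨h, hh, ht, hht, hm, rfl⟩
      have hhker : D 0 h = 0 := by
        have h2 : h ∈ LinearMap.ker (D 0 : Z 0 →ₗ[ℝ] Z (0 + 1)) := by rw [hH0.1, bot_sup_eq]; exact hh
        exact h2
      have hhtker : Dt 0 ht = 0 := by
        have h2 : ht ∈ LinearMap.ker (Dt 0 : Zt 0 →ₗ[ℝ] Zt (0 + 1)) := by rw [hHt0.1, bot_sup_eq]; exact hht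
        exact h2
      exact ⟨by simp [map_add, hhker, hlD], hhtker⟩
  · intro m hmn y
    rw [key]
    constructor
    · rintro ⟨hDω, hDtμ⟩
      have hμ : y.2 ∈ LinearMap.range (Dt m : Zt m →ₗ[ℝ] Zt (m + 1)) ⊔ Hst (m + 1) := by
        rw [← (hHt m hmn).1]; exact hDtμ
      obtain ⟨a, ⟨ν, rfl⟩, ht, hht, hsum⟩ := Submodule.mem_sup.1 hμ
      have hm' : S (m + 1) ht ∈ LinearMap.range (D (m + 1) : Z (m + 1) →ₗ[ℝ] Z (m + 1 + 1)) := by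
        refine ⟨y.1 + S m ν, ?_⟩
        have h2 : S (m + 1) (Dt m ν + ht) = S (m + 1) y.2 := by simp only [← hsum, ContinuousLinearMap.coe_coe]
        rw [map_add, hanti] at h2
        rw [ContinuousLinearMap.coe_coe, map_add, hDω, ← h2]
        abel
      have hω' : y.1 + S m ν - l (m + 1) ⟨S (m + 1) ht, hm'⟩
          ∈ LinearMap.ker (D (m + 1) : Z (m + 1) →ₗ[ℝ] Z (m + 1 + 1)) := by
        have h2 : S (m + 1) (Dt m ν + ht) = S (m + 1) y.2 := by simp only [← hsum, ContinuousLinearMap.coe_coe]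
        rw [map_add, hanti] at h2
        have : D (m + 1) (y.1 + S m ν - l (m + 1) ⟨S (m + 1) ht, hm'⟩)
            = S (m + 1) y.2 + D (m + 1) (S m ν) - S (m + 1) ht := by
          rw [map_sub, map_add, hDω, hlD]
        rw [LinearMap.mem_ker]
        show D (m + 1) _ = 0
        rw [this, ← h2]
        abel
      rw [(hH m hmn).1] at hω'
      obtain ⟨a, ⟨ξ, rfl⟩, h, hh, hsum2⟩ := Submodule.mem_sup.1 hω'
      refine ⟨(ξ, ν), h, hh, ht, hht, hm', ?_⟩
      have h1 : y.1 = (D m ξ - S m ν) + (h + l (m + 1) ⟨S (m + 1) ht, hm'⟩) := by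
        have := hsum2; simp only [ContinuousLinearMap.coe_coe] at this
        rw [eq_sub_iff_add_eq] at *
        linear_combination (norm := abel) this.symm
      ext
      · simpa [twistA] using h1
      · simpa [twistA] using hsum.symm
    · rintro ⟨x, h, hh, ht, hht, hm', rfl⟩
      have hhker : D (m + 1) h = 0 := by
        have h2 : h ∈ LinearMap.ker (D (m + 1) : Z (m + 1) →ₗ[ℝ] Z (m + 1 + 1)) := by
          rw [(hH m hmn).1]; exact Submodule.mem_sup_right hh
        exact h2
      have hhtker : Dt (m + 1) ht = 0 := by
        have h2 : ht ∈ LinearMap.ker (Dt (m + 1) : Zt (m + 1) →ₗ[ℝ] Zt (m + 1 + 1)) := by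
          rw [(hHt m hmn).1]; exact Submodule.mem_sup_right hht
        exact h2
      constructor
      · show D (m + 1) ((twistA D Dt S m x).1 + (h + l (m + 1) ⟨S (m + 1) ht, hm'⟩))
            = S (m + 1) ((twistA D Dt S m x).2 + ht)
        simp only [twistA, ContinuousLinearMap.prod_apply, ContinuousLinearMap.comp_apply,
          ContinuousLinearMap.sub_apply, ContinuousLinearMap.coe_fst',
          ContinuousLinearMap.coe_snd', map_add, map_sub, hDD, hhker, hlD, hanti]
        abel
      · show Dt (m + 1) ((twistA D Dt S m x).2 + ht) = 0
        simp [twistA, map_add, hDtDt, hhtker]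

end
end

section
/- Assume in addition that S^i(ker D̃^i) ⊆ ran D^i for every 0 ≤ i ≤ n−1. Then for every 0 ≤ i ≤ n, ker 𝒜^i = ran 𝒜^{i−1} ⊕ { (h + l^i(S^i h̃), h̃) : h ∈ H^i, h̃ ∈ H̃^i } as an internal direct sum of subspaces of Y^i. -/
/-!
STATEMENT 6: for every `0 ≤ i ≤ n`,
`ker 𝒜^i = ran 𝒜^{i-1} + { (h + l^i(S^i ht), ht) : h ∈ H^i, ht ∈ H̃^i, S^i ht ∈ ran D^i }`,
where `𝒜^i(ω,μ) = (D^i ω − S^i μ, D̃^i μ)` is the differential of the twisted complex on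
`Y^i = Z^i × Z̃^i`.  The position `i = 0` (where `ran 𝒜^{-1} = 0`) and the positions
`i = m + 1` are stated separately.
-/

noncomputable section

theorem stmt_7
    (n : ℕ) (hn : 1 ≤ n)
    {Z Zt : ℕ → Type*}
    [∀ i, NormedAddCommGroup (Z i)] [∀ i, InnerProductSpace ℝ (Z i)] [∀ i, CompleteSpace (Z i)]
    [∀ i, NormedAddCommGroup (Zt i)] [∀ i, InnerProductSpace ℝ (Zt i)] [∀ i, CompleteSpace (Zt i)]
    (D : ∀ i, Z i →L[ℝ] Z (i + 1)) (Dt : ∀ i, Zt i →L[ℝ] Zt (i + 1))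
    (S : ∀ i, Zt i →L[ℝ] Z (i + 1))
    (hDD : ∀ i (x : Z i), D (i + 1) (D i x) = 0)
    (hDtDt : ∀ i (x : Zt i), Dt (i + 1) (Dt i x) = 0)
    (hDtop : ∀ i, n ≤ i → D i = 0) (hDttop : ∀ i, n ≤ i → Dt i = 0)
    (hStop : ∀ i, n ≤ i → S i = 0)
    (hanti : ∀ i (x : Zt i), S (i + 1) (Dt i x) = -D (i + 1) (S i x))
    (Hs : ∀ i, Submodule ℝ (Z i)) (Hst : ∀ i, Submodule ℝ (Zt i))
    (hH0 : LinearMap.ker (D 0 : Z 0 →ₗ[ℝ] Z (0 + 1)) = ⊥ ⊔ Hs 0 ∧ Disjoint (⊥ : Submodule ℝ (Z 0)) (Hs 0))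
    (hH : ∀ m, m + 1 ≤ n →
      LinearMap.ker (D (m + 1) : Z (m + 1) →ₗ[ℝ] Z (m + 1 + 1)) = LinearMap.range (D m : Z m →ₗ[ℝ] Z (m + 1)) ⊔ Hs (m + 1)
        ∧ Disjoint (LinearMap.range (D m : Z m →ₗ[ℝ] Z (m + 1))) (Hs (m + 1)))
    (hHt0 : LinearMap.ker (Dt 0 : Zt 0 →ₗ[ℝ] Zt (0 + 1)) = ⊥ ⊔ Hst 0 ∧ Disjoint (⊥ : Submodule ℝ (Zt 0)) (Hst 0))
    (hHt : ∀ m, m + 1 ≤ n →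
      LinearMap.ker (Dt (m + 1) : Zt (m + 1) →ₗ[ℝ] Zt (m + 1 + 1)) = LinearMap.range (Dt m : Zt m →ₗ[ℝ] Zt (m + 1)) ⊔ Hst (m + 1)
        ∧ Disjoint (LinearMap.range (Dt m : Zt m →ₗ[ℝ] Zt (m + 1))) (Hst (m + 1)))
    (Ws : ∀ i, Submodule ℝ (Z i))
    (hW : ∀ i, i ≤ n → (⊤ : Submodule ℝ (Z i)) = LinearMap.ker (D i : Z i →ₗ[ℝ] Z (i + 1)) ⊔ Ws i
        ∧ Disjoint (LinearMap.ker (D i : Z i →ₗ[ℝ] Z (i + 1))) (Ws i))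
    (l : ∀ i, ↥(LinearMap.range (D i : Z i →ₗ[ℝ] Z (i + 1))) →ₗ[ℝ] Z i)
    (hlW : ∀ i (v : ↥(LinearMap.range (D i : Z i →ₗ[ℝ] Z (i + 1)))), l i v ∈ Ws i)
    (hlD : ∀ i (v : ↥(LinearMap.range (D i : Z i →ₗ[ℝ] Z (i + 1)))), D i (l i v) = (v : Z (i + 1)))
    -- the additional assumption: `S^i (ker D̃^i) ⊆ ran D^i` for `0 ≤ i ≤ n-1`
    (hSker : ∀ i, i + 1 ≤ n → ∀ x ∈ LinearMap.ker (Dt i : Zt i →ₗ[ℝ] Zt (i + 1)), S i x ∈ LinearMap.range (D i : Z i →ₗ[ℝ] Z (i + 1))) :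
    -- `ker 𝒜^i = ran 𝒜^{i-1} ⊕ {(h + l^i(S^i ht), ht) : h ∈ H^i, ht ∈ H̃^i}`.
    -- At position `0` (`ran 𝒜^{-1} = 0`):
    ((∀ y : Z 0 × Zt 0, twistA D Dt S 0 y = 0 ↔
        ∃ h ∈ Hs 0, ∃ ht ∈ Hst 0, ∃ hm : S 0 ht ∈ LinearMap.range (D 0 : Z 0 →ₗ[ℝ] Z (0 + 1)),
          y = (h + l 0 ⟨S 0 ht, hm⟩, ht)) ∧
    -- at positions `i = m + 1 ≤ n`: every kernel element decomposes, ...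
      (∀ m, m + 1 ≤ n → ∀ y : Z (m + 1) × Zt (m + 1),
        twistA D Dt S (m + 1) y = 0 ↔
          ∃ x : Z m × Zt m, ∃ h ∈ Hs (m + 1), ∃ ht ∈ Hst (m + 1),
            ∃ hm : S (m + 1) ht ∈ LinearMap.range (D (m + 1) : Z (m + 1) →ₗ[ℝ] Z (m + 1 + 1)),
              y = twistA D Dt S m x + (h + l (m + 1) ⟨S (m + 1) ht, hm⟩, ht)) ∧
    -- ... and the sum is direct: the two pieces intersect trivially.
      (∀ m, m + 1 ≤ n → ∀ x : Z m × Zt m, ∀ h ∈ Hs (m + 1), ∀ ht ∈ Hst (m + 1),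
        ∀ hm : S (m + 1) ht ∈ LinearMap.range (D (m + 1) : Z (m + 1) →ₗ[ℝ] Z (m + 1 + 1)),
          twistA D Dt S m x = (h + l (m + 1) ⟨S (m + 1) ht, hm⟩, ht) →
            twistA D Dt S m x = 0)) := by
  have tw : ∀ i (y : Z i × Zt i),
      twistA D Dt S i y = (D i y.1 - S i y.2, Dt i y.2) := fun i y => rfl
  have hHs0 : LinearMap.ker (D 0 : Z 0 →ₗ[ℝ] Z (0 + 1)) = Hs 0 := by simpa using hH0.1
  have hHst0 : LinearMap.ker (Dt 0 : Zt 0 →ₗ[ℝ] Zt (0 + 1)) = Hst 0 := by simpa using hHt0.1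
  refine ⟨?_, ?_, ?_⟩
  · -- position 0
    intro y
    constructor
    · intro hy
      rw [tw, Prod.ext_iff] at hy
      obtain ⟨hy1, hy2⟩ := hy
      simp only [Prod.fst_zero, Prod.snd_zero] at hy1 hy2
      have hker : y.2 ∈ LinearMap.ker (Dt 0 : Zt 0 →ₗ[ℝ] Zt (0 + 1)) := LinearMap.mem_ker.mpr hy2
      have hm : S 0 y.2 ∈ LinearMap.range (D 0 : Z 0 →ₗ[ℝ] Z (0 + 1)) := hSker 0 hn y.2 hker
      refine ⟨y.1 - l 0 ⟨S 0 y.2, hm⟩, ?_, y.2, hHst0 ▸ hker, hm, ?_⟩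
      · have : D 0 (y.1 - l 0 ⟨S 0 y.2, hm⟩) = 0 := by
          rw [map_sub, hlD]
          exact sub_eq_zero.mpr (sub_eq_zero.mp hy1)
        exact hHs0 ▸ LinearMap.mem_ker.mpr this
      · ext <;> simp
    · rintro ⟨h, hh, ht, hht, hm, rfl⟩
      have hhker : D 0 h = 0 := LinearMap.mem_ker.mp (hHs0 ▸ hh)
      have hhtker : Dt 0 ht = 0 := LinearMap.mem_ker.mp (hHst0 ▸ hht)
      rw [tw]
      simp [map_add, hhker, hlD, hhtker]
  · -- positions m+1 : decomposition
    intro m hmn y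
    have hkerDt : LinearMap.ker (Dt (m + 1) : Zt (m + 1) →ₗ[ℝ] Zt (m + 1 + 1)) = LinearMap.range (Dt m : Zt m →ₗ[ℝ] Zt (m + 1)) ⊔ Hst (m + 1) :=
      (hHt m hmn).1
    have hkerD : LinearMap.ker (D (m + 1) : Z (m + 1) →ₗ[ℝ] Z (m + 1 + 1)) = LinearMap.range (D m : Z m →ₗ[ℝ] Z (m + 1)) ⊔ Hs (m + 1) :=
      (hH m hmn).1
    constructor
    · intro hy
      rw [tw, Prod.ext_iff] at hy
      obtain ⟨hy1, hy2⟩ := hy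
      simp only [Prod.fst_zero, Prod.snd_zero] at hy1 hy2
      -- decompose y.2 = Dt m μ' + ht
      have h2 : y.2 ∈ LinearMap.range (Dt m : Zt m →ₗ[ℝ] Zt (m + 1)) ⊔ Hst (m + 1) :=
        hkerDt ▸ LinearMap.mem_ker.mpr hy2
      obtain ⟨a, ⟨μ', rfl⟩, b, hb, hab⟩ := Submodule.mem_sup.mp h2
      -- b ∈ ker Dt (m+1)
      have hbker : Dt (m + 1) b = 0 := by
        have h1 : Dt (m + 1) (Dt m μ') = 0 := hDtDt m μ'
        have : Dt (m + 1) (Dt m μ' + b) = 0 := hab ▸ hy2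
        simpa [h1] using this
      have hm' : S (m + 1) b ∈ LinearMap.range (D (m + 1) : Z (m + 1) →ₗ[ℝ] Z (m + 1 + 1)) := by
        rcases le_or_gt n (m + 1) with hle | hlt
        · rw [hStop (m + 1) hle]; simp
        · exact hSker (m + 1) hlt (by exact b) (LinearMap.mem_ker.mpr hbker)
      have key : D (m + 1) (y.1 + S m μ' - l (m + 1) ⟨S (m + 1) b, hm'⟩) = 0 := by
        rw [map_sub, map_add, hlD]
        have hS : S (m + 1) y.2 = -D (m + 1) (S m μ') + S (m + 1) b := by
          rw [← hab, map_add, ContinuousLinearMap.coe_coe, hanti]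
        have hy1' : D (m + 1) y.1 = S (m + 1) y.2 := sub_eq_zero.mp hy1
        rw [hy1', hS]
        abel
      have hmem : y.1 + S m μ' - l (m + 1) ⟨S (m + 1) b, hm'⟩ ∈
          LinearMap.range (D m : Z m →ₗ[ℝ] Z (m + 1)) ⊔ Hs (m + 1) := hkerD ▸ LinearMap.mem_ker.mpr key
      obtain ⟨a', ⟨ω', rfl⟩, h, hhh, hsum⟩ := Submodule.mem_sup.mp hmem
      refine ⟨(ω', μ'), h, hhh, b, hb, hm', ?_⟩
      rw [tw]
      have e1 : y.1 = D m ω' - S m μ' + (h + l (m + 1) ⟨S (m + 1) b, hm'⟩) := by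
        have h' : y.1 + S m μ' - l (m + 1) ⟨S (m + 1) b, hm'⟩ = D m ω' + h := hsum.symm
        have h2' : y.1 = D m ω' + h - S m μ' + l (m + 1) ⟨S (m + 1) b, hm'⟩ := by
          rw [← h']; abel
        rw [h2']; abel
      exact Prod.ext e1 hab.symm
    · rintro ⟨x, h, hh, ht, hht, hm', rfl⟩
      have hhker : D (m + 1) h = 0 := LinearMap.mem_ker.mp (hkerD ▸ Submodule.mem_sup_right hh)
      have hhtker : Dt (m + 1) ht = 0 :=
        LinearMap.mem_ker.mp (hkerDt ▸ Submodule.mem_sup_right hht)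
      rw [tw]
      simp only [Prod.fst_add, Prod.snd_add, tw]
      have c1 : D (m + 1) (D m x.1 - S m x.2 + (h + l (m + 1) ⟨S (m + 1) ht, hm'⟩))
          - S (m + 1) (Dt m x.2 + ht) = 0 := by
        rw [map_add, map_sub, map_add, hDD, hlD, map_add, hanti, hhker]
        abel
      have c2 : Dt (m + 1) (Dt m x.2 + ht) = 0 := by
        rw [map_add, hDtDt, hhtker, add_zero]
      exact Prod.ext c1 c2
  · -- directness
    intro m hmn x h hh ht hht hm' heq
    rw [tw, Prod.mk.injEq] at heq
    obtain ⟨e1, e2⟩ := heq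
    have hht0 : ht = 0 := by
      have hd := (hHt m hmn).2
      exact (Submodule.disjoint_def.mp hd ht ⟨x.2, e2⟩ hht)
    have hv0 : (⟨S (m + 1) ht, hm'⟩ : LinearMap.range (D (m + 1) : Z (m + 1) →ₗ[ℝ] Z (m + 1 + 1))) = 0 := by
      ext; simp [hht0]
    have hl0 : l (m + 1) ⟨S (m + 1) ht, hm'⟩ = 0 := by rw [hv0, map_zero]
    have hSx : S m x.2 ∈ LinearMap.range (D m : Z m →ₗ[ℝ] Z (m + 1)) := by
      have : x.2 ∈ LinearMap.ker (Dt m : Zt m →ₗ[ℝ] Zt (m + 1)) := LinearMap.mem_ker.mpr (by rw [ContinuousLinearMap.coe_coe, e2, hht0])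
      exact hSker m hmn x.2 this
    have hh0 : h = 0 := by
      have hd := (hH m hmn).2
      have hmem : h ∈ LinearMap.range (D m : Z m →ₗ[ℝ] Z (m + 1)) := by
        have : D m x.1 - S m x.2 = h := by rw [e1, hl0, add_zero]
        rw [← this]
        exact Submodule.sub_mem _ ⟨x.1, rfl⟩ hSx
      exact Submodule.disjoint_def.mp hd h hmem hh
    have c1 : D m x.1 - S m x.2 = 0 := by rw [e1, hh0, hl0, add_zero]
    have c2 : Dt m x.2 = 0 := by rw [e2, hht0]
    rw [tw]
    exact Prod.ext c1 c2

end
end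

section
/- The subcomplex ((I − Π^•)Y^•, 𝒜^•) is exact: for every 1 ≤ i ≤ n, if y ∈ Y^i satisfies Π^i y = 0 and 𝒜^i y = 0 (with the convention 𝒜^n = 0), then there exists x ∈ Y^{i−1} with Π^{i−1} x = 0 and 𝒜^{i−1} x = y; moreover if y ∈ Y^0 satisfies Π^0 y = 0 and 𝒜^0 y = 0 then y = 0. -/
/-!
STATEMENT 10: the subcomplex `((I − Π^•)Y^•, 𝒜^•)` is exact.
`(Y^•, 𝒜^•)`: `Π^{i+1} ∘ 𝒜^i = 𝒜^i ∘ Π^i` for `0 ≤ i ≤ n−1`, and `Π^i ∘ Π^i = Π^i` for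
`0 ≤ i ≤ n`.  Here `Π^i(ω,μ) = (P_{(ran S^{i-1})^⊥} ω, T^{i+1} D^i P_{(ran S^{i-1})^⊥} ω)`
for `i ≤ J`, and `Π^i(ω,μ) = (0, P_{ker S^i}(μ + D̃^{i-1} T^i ω))` for `J < i ≤ n`.
-/

noncomputable section

/-- `P_{ran S^{i-1}} : Z^i → Z^i` (with `P_{ran S^{-1}} = 0`). -/
def projS {Z : ℕ → Type*}
    [∀ i, NormedAddCommGroup (Z i)] [∀ i, InnerProductSpace ℝ (Z i)]
    (Pran : ∀ i, Z (i + 1) →L[ℝ] Z (i + 1)) : ∀ i, Z i →L[ℝ] Z i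
  | 0 => 0
  | m + 1 => Pran m

/-- The cochain projection `Π^i : Y^i → Y^i`:
`Π^i(ω,μ) = (P_{(ran S^{i-1})^⊥} ω, T^{i+1} D^i P_{(ran S^{i-1})^⊥} ω)` for `i ≤ J`, and
`Π^i(ω,μ) = (0, P_{ker S^i}(μ + D̃^{i-1} T^i ω))` for `i > J` (the case `i = 0 > J` is
vacuous since `J ≥ 0`). -/
def piMap {Z Zt : ℕ → Type*}
    [∀ i, NormedAddCommGroup (Z i)] [∀ i, InnerProductSpace ℝ (Z i)]
    [∀ i, NormedAddCommGroup (Zt i)] [∀ i, InnerProductSpace ℝ (Zt i)]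
    (D : ∀ i, Z i →L[ℝ] Z (i + 1)) (Dt : ∀ i, Zt i →L[ℝ] Zt (i + 1))
    (Pran : ∀ i, Z (i + 1) →L[ℝ] Z (i + 1)) (Pker : ∀ i, Zt i →L[ℝ] Zt i)
    (T : ∀ i, Z (i + 1) →L[ℝ] Zt i) (J : ℕ) (i : ℕ) :
    (Z i × Zt i) →L[ℝ] (Z i × Zt i) :=
  if i ≤ J then
    (((ContinuousLinearMap.id ℝ (Z i) - projS Pran i).comp
        (ContinuousLinearMap.fst ℝ (Z i) (Zt i))).prod
      (((T i).comp ((D i).comp (ContinuousLinearMap.id ℝ (Z i) - projS Pran i))).comp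
        (ContinuousLinearMap.fst ℝ (Z i) (Zt i))))
  else
    match i with
    | 0 => 0
    | m + 1 =>
      (0 : (Z (m + 1) × Zt (m + 1)) →L[ℝ] Z (m + 1)).prod
        ((Pker (m + 1)).comp
          ((ContinuousLinearMap.snd ℝ (Z (m + 1)) (Zt (m + 1)))
            + ((Dt m).comp (T m)).comp (ContinuousLinearMap.fst ℝ (Z (m + 1)) (Zt (m + 1)))))

theorem stmt_10
    (n J : ℕ) (hn : 1 ≤ n) (hJn : J + 1 ≤ n)
    {Z Zt : ℕ → Type*}
    [∀ i, NormedAddCommGroup (Z i)] [∀ i, InnerProductSpace ℝ (Z i)] [∀ i, CompleteSpace (Z i)]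
    [∀ i, NormedAddCommGroup (Zt i)] [∀ i, InnerProductSpace ℝ (Zt i)] [∀ i, CompleteSpace (Zt i)]
    (D : ∀ i, Z i →L[ℝ] Z (i + 1)) (Dt : ∀ i, Zt i →L[ℝ] Zt (i + 1))
    (S : ∀ i, Zt i →L[ℝ] Z (i + 1))
    (Pran : ∀ i, Z (i + 1) →L[ℝ] Z (i + 1)) (Pker : ∀ i, Zt i →L[ℝ] Zt i)
    (T : ∀ i, Z (i + 1) →L[ℝ] Zt i)
    (hDD : ∀ i (x : Z i), D (i + 1) (D i x) = 0)
    (hDtDt : ∀ i (x : Zt i), Dt (i + 1) (Dt i x) = 0)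
    (hDtop : ∀ i, n ≤ i → D i = 0) (hDttop : ∀ i, n ≤ i → Dt i = 0)
    (hStop : ∀ i, n ≤ i → S i = 0)
    (hanti : ∀ i (x : Zt i), S (i + 1) (Dt i x) = -D (i + 1) (S i x))
    (hScl : ∀ i, IsClosed ((LinearMap.range (S i : Zt i →ₗ[ℝ] Z (i + 1)) : Submodule ℝ (Z (i + 1))) : Set (Z (i + 1))))
    (hSinj : ∀ i, i ≤ J → Function.Injective (S i))
    (hSsurj : ∀ i, J ≤ i → i + 1 ≤ n → Function.Surjective (S i))
    (hPranMem : ∀ i (x : Z (i + 1)), Pran i x ∈ LinearMap.range (S i : Zt i →ₗ[ℝ] Z (i + 1)))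
    (hPranOrth : ∀ i (x : Z (i + 1)), x - Pran i x ∈ (LinearMap.range (S i : Zt i →ₗ[ℝ] Z (i + 1)))ᗮ)
    (hPkerMem : ∀ i (x : Zt i), Pker i x ∈ LinearMap.ker (S i : Zt i →ₗ[ℝ] Z (i + 1)))
    (hPkerOrth : ∀ i (x : Zt i), x - Pker i x ∈ (LinearMap.ker (S i : Zt i →ₗ[ℝ] Z (i + 1)))ᗮ)
    (hTzero : ∀ i, ∀ x ∈ (LinearMap.range (S i : Zt i →ₗ[ℝ] Z (i + 1)))ᗮ, T i x = 0)
    (hTS : ∀ i (x : Zt i), T i (S i x) = x - Pker i x)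
    (hST : ∀ i (x : Z (i + 1)), S i (T i x) = Pran i x) :
    -- for `1 ≤ i = m + 1 ≤ n`: any `y ∈ (I − Π^i)Y^i` with `𝒜^i y = 0` is `𝒜^{i-1} x`
    -- for some `x ∈ (I − Π^{i-1})Y^{i-1}`
    (∀ m, m + 1 ≤ n → ∀ y : Z (m + 1) × Zt (m + 1),
      piMap D Dt Pran Pker T J (m + 1) y = 0 →
      twistA D Dt S (m + 1) y = 0 →
        ∃ x : Z m × Zt m,
          piMap D Dt Pran Pker T J m x = 0 ∧ twistA D Dt S m x = y) ∧
    -- and at position `0`: `y ∈ (I − Π^0)Y^0` with `𝒜^0 y = 0` implies `y = 0`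
    (∀ y : Z 0 × Zt 0,
      piMap D Dt Pran Pker T J 0 y = 0 → twistA D Dt S 0 y = 0 → y = 0) := by
  have Tperp : ∀ i (x : Z (i + 1)), T i x ∈ (LinearMap.ker (S i : Zt i →ₗ[ℝ] Z (i + 1)))ᗮ := by
    intro i x
    obtain ⟨z, hz⟩ := hPranMem i x
    have hx : x = S i z + (x - Pran i x) := by rw [show S i z = Pran i x from hz]; abel
    have hT : T i x = T i (S i z) + T i (x - Pran i x) := by
      conv_lhs => rw [hx]
      exact map_add _ _ _
    rw [hTzero i _ (hPranOrth i x), add_zero, hTS] at hT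
    rw [hT]
    exact hPkerOrth i z
  have keyzero : ∀ i (v : Zt i), v ∈ LinearMap.ker (S i : Zt i →ₗ[ℝ] Z (i + 1)) →
      v ∈ (LinearMap.ker (S i : Zt i →ₗ[ℝ] Z (i + 1)))ᗮ → v = 0 := by
    intro i v hv hv'
    exact inner_self_eq_zero.mp ((Submodule.mem_orthogonal _ v).mp hv' v hv)
  constructor
  · intro m hm y hPi hAy
    obtain ⟨ω, μ⟩ := y
    have hA' : D (m+1) ω - S (m+1) μ = 0 ∧ Dt (m+1) μ = 0 := by
      simpa [twistA, Prod.ext_iff] using hAy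
    have hA1 : S (m+1) μ = D (m+1) ω := by
      have := hA'.1; rw [sub_eq_zero] at this; exact this.symm
    -- Step 1 : ω is in the range of S m
    have hω : Pran m ω = ω := by
      by_cases hle : m + 1 ≤ J
      · have h1 : ω - Pran m ω = 0 := by
          have := congrArg Prod.fst hPi
          simpa [piMap, hle, projS, Prod.ext_iff] using this
        exact (sub_eq_zero.mp h1).symm
      · have hsurj := hSsurj m (by omega) hm
        have horth := hPranOrth m ω
        rw [LinearMap.range_eq_top.mpr hsurj, Submodule.top_orthogonal_eq_bot,
          Submodule.mem_bot] at horth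
        exact (sub_eq_zero.mp horth).symm
    -- Step 2 : S^{m+1} kills μ + Dt m (T m ω)
    have hγ : S (m+1) (μ + Dt m (T m ω)) = 0 := by
      have h2 : S (m+1) (Dt m (T m ω)) = -D (m+1) ω := by
        rw [hanti m (T m ω), hST m ω, hω]
      rw [map_add, hA1, h2, add_neg_cancel]
    -- Step 3 : μ = - Dt m (T m ω)
    have hμ : μ + Dt m (T m ω) = 0 := by
      by_cases hle : m + 1 ≤ J
      · have hinj := hSinj (m+1) hle
        apply hinj
        rw [hγ, map_zero]
      · have hP : Pker (m+1) (μ + Dt m (T m ω)) = 0 := by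
          have := congrArg Prod.snd hPi
          simpa [piMap, hle, Prod.ext_iff] using this
        have hker : (μ + Dt m (T m ω)) ∈ LinearMap.ker (S (m+1) : Zt (m+1) →ₗ[ℝ] Z ((m+1) + 1)) := hγ
        have horth : (μ + Dt m (T m ω)) ∈ (LinearMap.ker (S (m+1) : Zt (m+1) →ₗ[ℝ] Z ((m+1) + 1)))ᗮ := by
          have := hPkerOrth (m+1) (μ + Dt m (T m ω))
          rwa [hP, sub_zero] at this
        exact keyzero _ _ hker horth
    refine ⟨(0, -T m ω), ?_, ?_⟩
    · by_cases hle : m ≤ J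
      · ext <;> simp [piMap, hle]
      · have hm1 : 1 ≤ m := by omega
        obtain ⟨k, rfl⟩ : ∃ k, m = k + 1 := ⟨m - 1, by omega⟩
        have hβ : Pker (k + 1) (-T (k + 1) ω) = 0 := by
          have hmem : Pker (k + 1) (-T (k + 1) ω) ∈ LinearMap.ker (S (k + 1) : Zt (k + 1) →ₗ[ℝ] Z ((k + 1) + 1)) :=
            hPkerMem _ _
          have horth : Pker (k + 1) (-T (k + 1) ω) ∈ (LinearMap.ker (S (k + 1) : Zt (k + 1) →ₗ[ℝ] Z ((k + 1) + 1)))ᗮ := by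
            have h1 : (-T (k + 1) ω) ∈ (LinearMap.ker (S (k + 1) : Zt (k + 1) →ₗ[ℝ] Z ((k + 1) + 1)))ᗮ :=
              Submodule.neg_mem _ (Tperp _ _)
            have h2 := hPkerOrth (k + 1) (-T (k + 1) ω)
            have heq : Pker (k + 1) (-T (k + 1) ω)
                = (-T (k + 1) ω) - ((-T (k + 1) ω) - Pker (k + 1) (-T (k + 1) ω)) := by
              abel
            rw [heq]
            exact Submodule.sub_mem _ h1 h2
          exact keyzero _ _ hmem horth
        ext
        · simp [piMap, hle]
        · simp [piMap, hle, hβ]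
    · have hfst : D m 0 - S m (-T m ω) = ω := by
        rw [map_zero, map_neg, hST, hω]
        abel
      have hsnd : Dt m (-T m ω) = μ := by
        rw [map_neg, neg_eq_iff_add_eq_zero]
        have hcomm : Dt m (T m ω) + μ = μ + Dt m (T m ω) := add_comm _ _
        rw [hcomm]
        exact hμ
      ext
      · simpa [twistA] using hfst
      · simpa [twistA] using hsnd
  · intro y hPi hAy
    obtain ⟨ω, μ⟩ := y
    have hω : ω = 0 := by
      have := congrArg Prod.fst hPi
      simpa [piMap, Nat.zero_le, projS, Prod.ext_iff] using this
    have hA' : D 0 ω - S 0 μ = 0 ∧ Dt 0 μ = 0 := by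
      simpa [twistA, Prod.ext_iff] using hAy
    have hS : S 0 μ = 0 := by
      have := hA'.1
      rw [hω, map_zero, zero_sub, neg_eq_zero] at this
      exact this
    have hμ : μ = 0 := hSinj 0 (Nat.zero_le J) (by rw [hS, map_zero])
    simp [hω, hμ]


end
end

section
/- For all integers n ≥ 1, 0 ≤ k < n and 1 ≤ m ≤ n, the linear map s^{k,m} : Alt^{k,m}(ℝ^n) → Alt^{k+1,m−1}(ℝ^n) is injective if k ≤ m − 1 and surjective if k ≥ m − 1. -/
open Fin Function Equiv

variable {n : ℕ}
local notation "V" => EuclideanSpace ℝ (Fin n)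



theorem alt_map_comp_perm {N : Type*} [AddCommGroup N] [Module ℝ N] {r : ℕ}
    (g : V [⋀^Fin r]→ₗ[ℝ] N) (u : Fin r → V) (σ : Equiv.Perm (Fin r)) :
    g (u ∘ σ) = (((Equiv.Perm.sign σ : ℤ) : ℝ)) • g u := by
  rw [g.map_perm u σ, Units.smul_def, ← Int.cast_smul_eq_zsmul ℝ]

theorem coe_succAbove' {a : ℕ} (p : Fin (a+1)) (i : Fin a) :
    ((p.succAbove i : Fin (a+1)) : ℕ) = if (i : ℕ) < (p : ℕ) then (i : ℕ) else (i : ℕ) + 1 := by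
  rcases lt_or_ge ((i : ℕ)) ((p : ℕ)) with h | h
  · rw [Fin.succAbove_of_castSucc_lt _ _ (by simpa [Fin.lt_def] using h)]
    simp [h]
  · rw [Fin.succAbove_of_le_castSucc _ _ (by simpa [Fin.le_def] using h)]
    simp [Nat.not_lt.mpr h]

theorem succAbove_succAbove_idx {a : ℕ} (p q : Fin (a+2)) (hpq : p < q)
    (p' r' : Fin (a+1)) (hp' : (p' : ℕ) = (p : ℕ)) (hr' : (r' : ℕ) + 1 = (q : ℕ))
    (k : Fin a) : p.succAbove (r'.succAbove k) = q.succAbove (p'.succAbove k) := by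
  have hq := q.isLt
  have h1 : (p:ℕ) < (q:ℕ) := hpq
  apply Fin.ext
  rw [coe_succAbove', coe_succAbove', coe_succAbove', coe_succAbove']
  split_ifs <;> omega

theorem key_cancel {N : Type*} [AddCommGroup N] [Module ℝ N] {a : ℕ}
    (f : V →ₗ[ℝ] ((V) [⋀^Fin (a+1)]→ₗ[ℝ] N)) (v : Fin (a+2) → V)
    (p q : Fin (a+2)) (hpq : p < q) (hv : v p = v q) :
    ∑ l : Fin (a+2), ((-1 : ℝ) ^ (l : ℕ)) • f (v l) (v ∘ l.succAbove) = 0 := by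
  have hq1 : 1 ≤ (q : ℕ) := by
    have : (p:ℕ) < (q:ℕ) := hpq; omega
  set p' : Fin (a+1) := ⟨(p : ℕ), by have : (p:ℕ) < (q:ℕ) := hpq; omega⟩ with hp'def
  set r' : Fin (a+1) := ⟨(q : ℕ) - 1, by have := q.isLt; omega⟩ with hr'def
  have hp' : ((p' : ℕ)) = (p : ℕ) := rfl
  have hr' : ((r' : ℕ)) + 1 = (q : ℕ) := by simp [hr'def]; omega
  -- terms outside {p, q} vanish
  rw [← Finset.sum_subset (Finset.subset_univ ({p, q} : Finset (Fin (a+2))))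
      (fun l _ hl => ?_)]
  · rw [Finset.sum_pair hpq.ne]
    have hu : (v ∘ p.succAbove) ∘ (Fin.cycleRange r').symm
        = (v ∘ q.succAbove) ∘ (Fin.cycleRange p').symm := by
      funext x
      induction x using Fin.cases with
      | zero =>
          show v (p.succAbove ((Fin.cycleRange r').symm 0))
            = v (q.succAbove ((Fin.cycleRange p').symm 0))
          rw [Fin.cycleRange_symm_zero, Fin.cycleRange_symm_zero]
          have hpq' : (p:ℕ) < (q:ℕ) := hpq
          have e1 : p.succAbove r' = q := by
            apply Fin.ext; rw [coe_succAbove']; split_ifs <;> omega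
          have e2 : q.succAbove p' = p := by
            apply Fin.ext; rw [coe_succAbove']; split_ifs <;> omega
          rw [e1, e2, hv]
      | succ k =>
          show v (p.succAbove ((Fin.cycleRange r').symm k.succ))
            = v (q.succAbove ((Fin.cycleRange p').symm k.succ))
          rw [Fin.cycleRange_symm_succ, Fin.cycleRange_symm_succ]
          exact congrArg v (succAbove_succAbove_idx p q hpq p' r' hp' hr' k)
    have h1 : v ∘ p.succAbove = ((v ∘ p.succAbove) ∘ (Fin.cycleRange r').symm)
        ∘ (Fin.cycleRange r') := by funext x; simp
    have h2 : v ∘ q.succAbove = ((v ∘ q.succAbove) ∘ (Fin.cycleRange p').symm)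
        ∘ (Fin.cycleRange p') := by funext x; simp
    have A1 := alt_map_comp_perm (f (v p)) ((v ∘ p.succAbove) ∘ (Fin.cycleRange r').symm)
      (Fin.cycleRange r')
    have A2 := alt_map_comp_perm (f (v q)) ((v ∘ q.succAbove) ∘ (Fin.cycleRange p').symm)
      (Fin.cycleRange p')
    rw [← h1] at A1
    rw [← h2] at A2
    rw [A1, A2, hu, hv]
    rw [Fin.sign_cycleRange, Fin.sign_cycleRange]
    rw [smul_smul, smul_smul, ← add_smul]
    apply smul_eq_zero_of_left
    push_cast
    generalize hq' : (q : ℕ) - 1 = t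
    have hqt : (q : ℕ) = t + 1 := by omega
    rw [hqt, pow_succ]
    simp only [hp', show (r' : ℕ) = t by omega]
    ring
  · -- vanishing terms
    simp only [Finset.mem_insert, Finset.mem_singleton, not_or] at hl
    obtain ⟨hlp, hlq⟩ := hl
    obtain ⟨zp, hzp⟩ := Fin.exists_succAbove_eq (fun h => hlp h.symm : p ≠ l)
    obtain ⟨zq, hzq⟩ := Fin.exists_succAbove_eq (fun h => hlq h.symm : q ≠ l)
    have hzne : zp ≠ zq := by
      intro h; apply hpq.ne; rw [← hzp, ← hzq, h]
    have : f (v l) (v ∘ l.succAbove) = 0 := by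
      apply (f (v l)).map_eq_zero_of_eq (v ∘ l.succAbove) _ hzne
      show v (l.succAbove zp) = v (l.succAbove zq)
      rw [hzp, hzq, hv]
    rw [this, smul_zero]


-- basic reorder lemma
theorem cons_self_comp_succAbove {α : Type*} {r : ℕ} (u : Fin (r+1) → α) (l : Fin (r+1)) :
    (Fin.cons (u l) (u ∘ l.succAbove) : Fin (r+1) → α) = u ∘ (Fin.cycleRange l).symm := by
  funext q
  induction q using Fin.cases with
  | zero => simp
  | succ q => simp

theorem alt_map_comp_cycleRange {N : Type*} [AddCommGroup N] [Module ℝ N] {r : ℕ}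
    (g : V [⋀^Fin (r+1)]→ₗ[ℝ] N) (u : Fin (r+1) → V) (σ : Equiv.Perm (Fin (r+1))) :
    g (u ∘ σ) = (((Equiv.Perm.sign σ : ℤ) : ℝ)) • g u := by
  rw [g.map_perm u σ]
  rw [Units.smul_def, ← Int.cast_smul_eq_zsmul ℝ]

theorem alt_cons_succAbove {N : Type*} [AddCommGroup N] [Module ℝ N] {r : ℕ}
    (g : V [⋀^Fin (r+1)]→ₗ[ℝ] N) (u : Fin (r+1) → V) (l : Fin (r+1)) :
    g (Fin.cons (u l) (u ∘ l.succAbove)) = ((-1 : ℝ) ^ (l : ℕ)) • g u := by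
  rw [cons_self_comp_succAbove, alt_map_comp_cycleRange]
  norm_num [Equiv.Perm.sign_symm, Fin.sign_cycleRange]


noncomputable def uncurryMul {N : Type*} [AddCommGroup N] [Module ℝ N] {a : ℕ}
    (f : V →ₗ[ℝ] ((V) [⋀^Fin a]→ₗ[ℝ] N)) :
    MultilinearMap ℝ (fun _ : Fin (a+1) => (V)) N :=
  ∑ l : Fin (a+1), ((-1 : ℝ) ^ (l : ℕ)) •
    (MultilinearMap.domDomCongr (Fin.cycleRange l).symm
      (LinearMap.uncurryLeft
        ({ toFun := fun x => ((f x).toMultilinearMap),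
           map_add' := by intro x y; simp only [map_add]; rfl,
           map_smul' := by intro c x; simp only [map_smul]; rfl } :
          (V) →ₗ[ℝ] MultilinearMap ℝ (fun _ : Fin a => (V)) N)))

theorem uncurryMul_apply {N : Type*} [AddCommGroup N] [Module ℝ N] {a : ℕ}
    (f : V →ₗ[ℝ] ((V) [⋀^Fin a]→ₗ[ℝ] N)) (v : Fin (a+1) → V) :
    uncurryMul f v = ∑ l : Fin (a+1), ((-1 : ℝ) ^ (l : ℕ)) • f (v l) (v ∘ l.succAbove) := by
  rw [uncurryMul, MultilinearMap.sum_apply]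
  refine Finset.sum_congr rfl fun l _ => ?_
  rw [MultilinearMap.smul_apply, MultilinearMap.domDomCongr_apply, LinearMap.uncurryLeft_apply]
  have h0 : v ((Fin.cycleRange l).symm 0) = v l := congrArg v (Fin.cycleRange_symm_zero l)
  have h1 : (Fin.tail fun i => v ((Fin.cycleRange l).symm i)) = v ∘ l.succAbove := by
    funext j
    show v ((Fin.cycleRange l).symm j.succ) = v (l.succAbove j)
    exact congrArg v (Fin.cycleRange_symm_succ l j)
  rw [h0, h1]
  rfl


noncomputable def uncurryAlt {N : Type*} [AddCommGroup N] [Module ℝ N] {a : ℕ}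
    (f : V →ₗ[ℝ] ((V) [⋀^Fin a]→ₗ[ℝ] N)) : (V) [⋀^Fin (a+1)]→ₗ[ℝ] N where
  toMultilinearMap := uncurryMul f
  map_eq_zero_of_eq' := by
    intro v p q hv hpq
    show uncurryMul f v = 0
    rw [uncurryMul_apply]
    revert f v p q
    cases a with
    | zero =>
        intro f _ v p q hv hpq
        exact absurd (Fin.ext (by omega)) hpq
    | succ b =>
        intro f _ v p q hv hpq
        rcases hpq.lt_or_gt with h | h
        · exact key_cancel f v p q h hv
        · exact key_cancel f v q p h hv.symm

theorem uncurryAlt_apply {N : Type*} [AddCommGroup N] [Module ℝ N] {a : ℕ}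
    (f : V →ₗ[ℝ] ((V) [⋀^Fin a]→ₗ[ℝ] N)) (v : Fin (a+1) → V) :
    uncurryAlt f v = ∑ l : Fin (a+1), ((-1 : ℝ) ^ (l : ℕ)) • f (v l) (v ∘ l.succAbove) :=
  uncurryMul_apply f v

/-- evaluation of an alternating map at a tuple, as a linear map -/
def evalAlt {b : ℕ} (w : Fin b → V) : ((V) [⋀^Fin b]→ₗ[ℝ] ℝ) →ₗ[ℝ] ℝ where
  toFun ρ := ρ w
  map_add' _ _ := rfl
  map_smul' _ _ := rfl

/-- flip of a doubly-alternating map -/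
noncomputable def flipA {a b : ℕ} (μ : (V) [⋀^Fin a]→ₗ[ℝ] ((V) [⋀^Fin b]→ₗ[ℝ] ℝ)) :
    (V) [⋀^Fin b]→ₗ[ℝ] ((V) [⋀^Fin a]→ₗ[ℝ] ℝ) where
  toFun w := (evalAlt w).compAlternatingMap μ
  map_update_add' w i x y := by
    ext v
    exact (μ v).map_update_add w i x y
  map_update_smul' w i c x := by
    ext v
    exact (μ v).map_update_smul w i c x
  map_eq_zero_of_eq' w i j hw hij := by
    ext u
    exact (μ u).map_eq_zero_of_eq w hw hij

@[simp] theorem flipA_apply {a b : ℕ} (μ : (V) [⋀^Fin a]→ₗ[ℝ] ((V) [⋀^Fin b]→ₗ[ℝ] ℝ))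
    (w : Fin b → V) (v : Fin a → V) : flipA μ w v = μ v w := rfl

theorem flipA_flipA {a b : ℕ} (μ : (V) [⋀^Fin a]→ₗ[ℝ] ((V) [⋀^Fin b]→ₗ[ℝ] ℝ)) :
    flipA (flipA μ) = μ := by
  ext v w; rfl

/-- the operator `s` at a general level -/
noncomputable def Sa {a b : ℕ} (μ : (V) [⋀^Fin a]→ₗ[ℝ] ((V) [⋀^Fin (b+1)]→ₗ[ℝ] ℝ)) :
    (V) [⋀^Fin (a+1)]→ₗ[ℝ] ((V) [⋀^Fin b]→ₗ[ℝ] ℝ) :=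
  uncurryAlt
    { toFun := fun x => ((AlternatingMap.curryLeftLinearMap (R := ℝ)).flip x).compAlternatingMap μ
      map_add' := by
        intro x y
        ext u w
        simp
      map_smul' := by
        intro c x
        ext u w
        simp }

theorem Sa_apply {a b : ℕ} (μ : (V) [⋀^Fin a]→ₗ[ℝ] ((V) [⋀^Fin (b+1)]→ₗ[ℝ] ℝ))
    (v : Fin (a+1) → V) (w : Fin b → V) :
    Sa μ v w = ∑ l : Fin (a+1), ((-1 : ℝ) ^ (l : ℕ)) * μ (v ∘ l.succAbove) (Fin.cons (v l) w) := by
  have : Sa μ v w = evalAlt w (Sa μ v) := rfl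
  rw [this, Sa, uncurryAlt_apply, map_sum (evalAlt w) _ Finset.univ]
  refine Finset.sum_congr rfl fun l _ => ?_
  rw [map_smul]
  rw [smul_eq_mul]
  rfl


noncomputable def Ta {a b : ℕ} (ν : (V) [⋀^Fin (a+1)]→ₗ[ℝ] ((V) [⋀^Fin b]→ₗ[ℝ] ℝ)) :
    (V) [⋀^Fin a]→ₗ[ℝ] ((V) [⋀^Fin (b+1)]→ₗ[ℝ] ℝ) := flipA (Sa (flipA ν))

theorem Ta_apply {a b : ℕ} (ν : (V) [⋀^Fin (a+1)]→ₗ[ℝ] ((V) [⋀^Fin b]→ₗ[ℝ] ℝ))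
    (v : Fin a → V) (w : Fin (b+1) → V) :
    Ta ν v w = ∑ j : Fin (b+1), ((-1 : ℝ) ^ (j : ℕ)) * ν (Fin.cons (w j) v) (w ∘ j.succAbove) := by
  rw [Ta, flipA_apply, Sa_apply]
  exact Finset.sum_congr rfl fun j _ => by rw [flipA_apply]

theorem cons_comp_succAbove_succ {α : Type*} {r : ℕ} (x : α) (v : Fin (r+1) → α)
    (i : Fin (r+1)) :
    (Fin.cons x v : Fin (r+2) → α) ∘ (Fin.succ i).succAbove = Fin.cons x (v ∘ i.succAbove) := by
  funext q
  induction q using Fin.cases with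
  | zero =>
      show (Fin.cons x v : Fin (r+2) → α) ((Fin.succ i).succAbove 0) = x
      rw [Fin.succAbove_ne_zero_zero (Fin.succ_ne_zero i)]
      rfl
  | succ k =>
      show (Fin.cons x v : Fin (r+2) → α) ((Fin.succ i).succAbove k.succ) = v (i.succAbove k)
      rw [Fin.succ_succAbove_succ]
      simp

theorem cons_comp_succAbove_zero {α : Type*} {r : ℕ} (x : α) (v : Fin (r+1) → α) :
    (Fin.cons x v : Fin (r+2) → α) ∘ (0 : Fin (r+2)).succAbove = v := by
  funext q
  show (Fin.cons x v : Fin (r+2) → α) ((0 : Fin (r+2)).succAbove q) = v q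
  rw [Fin.succAbove_zero]
  simp

/-- identity C1 at general level -/
theorem C1 {a b : ℕ} (μ : (V) [⋀^Fin (a+1)]→ₗ[ℝ] ((V) [⋀^Fin (b+1)]→ₗ[ℝ] ℝ))
    (v : Fin (a+1) → V) (w : Fin (b+1) → V) :
    Ta (Sa μ) v w = ((b:ℝ)+1) * μ v w
      + ∑ i : Fin (a+1), ∑ j : Fin (b+1), ((-1 : ℝ) ^ ((i:ℕ)+(j:ℕ)+1))
          * μ (Fin.cons (w j) (v ∘ i.succAbove)) (Fin.cons (v i) (w ∘ j.succAbove)) := by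
  rw [Ta_apply]
  have hterm : ∀ j : Fin (b+1),
      Sa μ (Fin.cons (w j) v) (w ∘ j.succAbove)
        = ((-1:ℝ)^(j:ℕ)) * (μ v w)
          + ∑ i : Fin (a+1), ((-1:ℝ)^((i:ℕ)+1))
              * μ (Fin.cons (w j) (v ∘ i.succAbove)) (Fin.cons (v i) (w ∘ j.succAbove)) := by
    intro j
    rw [Sa_apply, Fin.sum_univ_succ]
    congr 1
    · -- l = 0 term
      rw [cons_comp_succAbove_zero]
      show 1 * μ v (Fin.cons (w j) (w ∘ j.succAbove)) = _
      rw [one_mul]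
      rw [alt_cons_succAbove (μ v) w j, smul_eq_mul]
    · refine Finset.sum_congr rfl fun i _ => ?_
      rw [cons_comp_succAbove_succ, Fin.val_succ, Fin.cons_succ]
  calc ∑ j : Fin (b+1), ((-1:ℝ)^(j:ℕ)) * Sa μ (Fin.cons (w j) v) (w ∘ j.succAbove)
      = ∑ j : Fin (b+1), (μ v w
          + ∑ i : Fin (a+1), ((-1:ℝ)^((i:ℕ)+(j:ℕ)+1))
            * μ (Fin.cons (w j) (v ∘ i.succAbove)) (Fin.cons (v i) (w ∘ j.succAbove))) := by
        refine Finset.sum_congr rfl fun j _ => ?_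
        rw [hterm j, mul_add, ← mul_assoc, ← pow_add, Even.neg_one_pow ⟨(j:ℕ), rfl⟩, one_mul,
          Finset.mul_sum]
        congr 1
        refine Finset.sum_congr rfl fun i _ => ?_
        rw [← mul_assoc, ← pow_add]
        congr 2
        omega
    _ = _ := by
        rw [Finset.sum_add_distrib, Finset.sum_const, Finset.card_univ, Fintype.card_fin,
          nsmul_eq_mul, Finset.sum_comm]
        push_cast
        ring_nf


/-- C1 at level a = 0 -/
theorem C1₀ {b : ℕ} (μ : (V) [⋀^Fin 0]→ₗ[ℝ] ((V) [⋀^Fin (b+1)]→ₗ[ℝ] ℝ))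
    (v : Fin 0 → V) (w : Fin (b+1) → V) :
    Ta (Sa μ) v w = ((b:ℝ)+1) * μ v w := by
  rw [Ta_apply]
  have hterm : ∀ j : Fin (b+1),
      Sa μ (Fin.cons (w j) v) (w ∘ j.succAbove) = ((-1:ℝ)^(j:ℕ)) * (μ v w) := by
    intro j
    rw [Sa_apply, Fin.sum_univ_one]
    have h0 : (Fin.cons (w j) v : Fin 1 → V) ∘ (0 : Fin 1).succAbove = v := by
      funext q; exact q.elim0
    rw [h0]
    show 1 * μ v (Fin.cons ((Fin.cons (w j) v : Fin 1 → V) 0) (w ∘ j.succAbove)) = _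
    rw [one_mul, Fin.cons_zero, alt_cons_succAbove (μ v) w j, smul_eq_mul]
  calc ∑ j : Fin (b+1), ((-1:ℝ)^(j:ℕ)) * Sa μ (Fin.cons (w j) v) (w ∘ j.succAbove)
      = ∑ _j : Fin (b+1), μ v w := by
        refine Finset.sum_congr rfl fun j _ => ?_
        rw [hterm j, ← mul_assoc, ← pow_add, Even.neg_one_pow ⟨(j:ℕ), rfl⟩, one_mul]
    _ = _ := by
        rw [Finset.sum_const, Finset.card_univ, Fintype.card_fin, nsmul_eq_mul]
        push_cast; ring

/-- C2 at general level -/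
theorem C2 {a b : ℕ} (ν : (V) [⋀^Fin (a+1)]→ₗ[ℝ] ((V) [⋀^Fin (b+1)]→ₗ[ℝ] ℝ))
    (v : Fin (a+1) → V) (w : Fin (b+1) → V) :
    Sa (Ta ν) v w = ((a:ℝ)+1) * ν v w
      + ∑ i : Fin (a+1), ∑ j : Fin (b+1), ((-1 : ℝ) ^ ((i:ℕ)+(j:ℕ)+1))
          * ν (Fin.cons (w j) (v ∘ i.succAbove)) (Fin.cons (v i) (w ∘ j.succAbove)) := by
  have key := C1 (flipA ν) w v
  have lhs : Ta (Sa (flipA ν)) w v = Sa (Ta ν) v w := by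
    rw [Ta, flipA_apply]
    rfl
  rw [lhs, flipA_apply] at key
  rw [key]
  congr 1
  rw [Finset.sum_comm]
  refine Finset.sum_congr rfl fun i _ => Finset.sum_congr rfl fun j _ => ?_
  rw [flipA_apply]
  congr 2
  omega

/-- C2 at level b = 0 -/
theorem C2₀ {a : ℕ} (ν : (V) [⋀^Fin (a+1)]→ₗ[ℝ] ((V) [⋀^Fin 0]→ₗ[ℝ] ℝ))
    (v : Fin (a+1) → V) (w : Fin 0 → V) :
    Sa (Ta ν) v w = ((a:ℝ)+1) * ν v w := by
  have key := C1₀ (flipA ν) w v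
  have lhs : Ta (Sa (flipA ν)) w v = Sa (Ta ν) v w := by
    rw [Ta, flipA_apply]
    rfl
  rw [lhs, flipA_apply] at key
  rw [key]

noncomputable def bas : Module.Basis (Fin n) ℝ (EuclideanSpace ℝ (Fin n)) :=
  (EuclideanSpace.basisFun (Fin n) ℝ).toBasis

noncomputable def PP {a b : ℕ} (μ ν : (V) [⋀^Fin a]→ₗ[ℝ] ((V) [⋀^Fin b]→ₗ[ℝ] ℝ)) : ℝ :=
  ∑ f : Fin a → Fin n, ∑ g : Fin b → Fin n,
    μ (fun i => bas (f i)) (fun i => bas (g i)) * ν (fun i => bas (f i)) (fun i => bas (g i))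

noncomputable def QQ {a b : ℕ} (μ : (V) [⋀^Fin a]→ₗ[ℝ] ((V) [⋀^Fin (b+1)]→ₗ[ℝ] ℝ))
    (ν : (V) [⋀^Fin (a+1)]→ₗ[ℝ] ((V) [⋀^Fin b]→ₗ[ℝ] ℝ)) : ℝ :=
  ∑ c : Fin n, ∑ f : Fin a → Fin n, ∑ g : Fin b → Fin n,
    μ (fun i => bas (f i)) (Fin.cons (bas c) (fun i => bas (g i)))
      * ν (Fin.cons (bas c) (fun i => bas (f i))) (fun i => bas (g i))

/-- adjointness identity A1 -/
theorem A1 {a b : ℕ} (μ : (V) [⋀^Fin a]→ₗ[ℝ] ((V) [⋀^Fin (b+1)]→ₗ[ℝ] ℝ))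
    (ν : (V) [⋀^Fin (a+1)]→ₗ[ℝ] ((V) [⋀^Fin b]→ₗ[ℝ] ℝ)) :
    PP (Sa μ) ν = ((a:ℝ)+1) * QQ μ ν := by
  have neg_sq : ∀ l : Fin (a+1), ((-1:ℝ)^(l:ℕ)) * ((-1:ℝ)^(l:ℕ)) = 1 := by
    intro l
    rw [← pow_add]
    exact Even.neg_one_pow ⟨(l:ℕ), rfl⟩
  have step1 : PP (Sa μ) ν = ∑ l : Fin (a+1), ∑ F : Fin (a+1) → Fin n, ∑ G : Fin b → Fin n,
      ((-1 : ℝ) ^ (l : ℕ)) * μ ((fun i => bas (F i)) ∘ l.succAbove)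
          (Fin.cons (bas (F l)) (fun i => bas (G i)))
        * ν (fun i => bas (F i)) (fun i => bas (G i)) := by
    rw [PP]
    have : ∀ F : Fin (a+1) → Fin n, ∀ G : Fin b → Fin n,
        Sa μ (fun i => bas (F i)) (fun i => bas (G i)) * ν (fun i => bas (F i)) (fun i => bas (G i))
        = ∑ l : Fin (a+1), ((-1 : ℝ) ^ (l : ℕ)) * μ ((fun i => bas (F i)) ∘ l.succAbove)
            (Fin.cons (bas (F l)) (fun i => bas (G i)))
          * ν (fun i => bas (F i)) (fun i => bas (G i)) := by
      intro F G
      rw [Sa_apply, Finset.sum_mul]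
    calc (∑ F : Fin (a+1) → Fin n, ∑ G : Fin b → Fin n,
        Sa μ (fun i => bas (F i)) (fun i => bas (G i)) * ν (fun i => bas (F i)) (fun i => bas (G i)))
        = ∑ F : Fin (a+1) → Fin n, ∑ G : Fin b → Fin n, ∑ l : Fin (a+1),
            ((-1 : ℝ) ^ (l : ℕ)) * μ ((fun i => bas (F i)) ∘ l.succAbove)
              (Fin.cons (bas (F l)) (fun i => bas (G i)))
            * ν (fun i => bas (F i)) (fun i => bas (G i)) :=
          Finset.sum_congr rfl fun F _ => Finset.sum_congr rfl fun G _ => this F G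
      _ = ∑ F : Fin (a+1) → Fin n, ∑ l : Fin (a+1), ∑ G : Fin b → Fin n,
            ((-1 : ℝ) ^ (l : ℕ)) * μ ((fun i => bas (F i)) ∘ l.succAbove)
              (Fin.cons (bas (F l)) (fun i => bas (G i)))
            * ν (fun i => bas (F i)) (fun i => bas (G i)) :=
          Finset.sum_congr rfl fun F _ => Finset.sum_comm
      _ = _ := Finset.sum_comm
  rw [step1]
  have step2 : ∀ l : Fin (a+1), (∑ F : Fin (a+1) → Fin n, ∑ G : Fin b → Fin n,
      ((-1 : ℝ) ^ (l : ℕ)) * μ ((fun i => bas (F i)) ∘ l.succAbove)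
          (Fin.cons (bas (F l)) (fun i => bas (G i)))
        * ν (fun i => bas (F i)) (fun i => bas (G i))) = QQ μ ν := by
    intro l
    set e1 : ((Fin (a+1)) → Fin n) ≃ ((Fin (a+1)) → Fin n) :=
      Equiv.arrowCongr (Fin.cycleRange l).symm (Equiv.refl (Fin n)) with he1def
    have key : ∀ H : Fin (a+1) → Fin n,
        (∑ G : Fin b → Fin n,
          ((-1 : ℝ) ^ (l : ℕ)) * μ ((fun i => bas ((e1 H) i)) ∘ l.succAbove)
            (Fin.cons (bas ((e1 H) l)) (fun i => bas (G i)))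
          * ν (fun i => bas ((e1 H) i)) (fun i => bas (G i)))
        = ∑ G : Fin b → Fin n,
            μ (fun q => bas (H q.succ)) (Fin.cons (bas (H 0)) (fun i => bas (G i)))
            * ν (Fin.cons (bas (H 0)) (fun q => bas (H q.succ))) (fun i => bas (G i)) := by
      intro H
      refine Finset.sum_congr rfl fun G _ => ?_
      have h1 : (fun i => bas ((e1 H) i)) ∘ l.succAbove = (fun q => bas (H q.succ)) := by
        funext q
        show bas (H (Fin.cycleRange l (l.succAbove q))) = bas (H q.succ)
        rw [Fin.cycleRange_succAbove]
      have h2 : bas ((e1 H) l) = bas (H 0) := by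
        show bas (H (Fin.cycleRange l l)) = bas (H 0)
        rw [Fin.cycleRange_self]
      have h3 : ν (fun i => bas ((e1 H) i)) = ((-1 : ℝ) ^ (l : ℕ)) • ν (fun i => bas (H i)) := by
        have h : (fun i => bas ((e1 H) i)) = (fun i => bas (H i)) ∘ (Fin.cycleRange l) := rfl
        rw [h, alt_map_comp_perm, Fin.sign_cycleRange]
        norm_num
      have h4 : (fun i => bas (H i)) = Fin.cons (bas (H 0)) (fun q => bas (H q.succ)) := by
        funext q
        induction q using Fin.cases with
        | zero => simp
        | succ k => simp
      rw [h1, h2, h3, h4, AlternatingMap.smul_apply, smul_eq_mul]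
      calc ((-1 : ℝ) ^ (l : ℕ)) * μ (fun q => bas (H q.succ))
              (Fin.cons (bas (H 0)) (fun i => bas (G i)))
            * (((-1 : ℝ) ^ (l : ℕ))
              * ν (Fin.cons (bas (H 0)) (fun q => bas (H q.succ))) (fun i => bas (G i)))
          = (((-1 : ℝ) ^ (l : ℕ)) * ((-1 : ℝ) ^ (l : ℕ)))
            * (μ (fun q => bas (H q.succ)) (Fin.cons (bas (H 0)) (fun i => bas (G i)))
              * ν (Fin.cons (bas (H 0)) (fun q => bas (H q.succ))) (fun i => bas (G i))) := by
            ring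
        _ = _ := by rw [neg_sq l, one_mul]
    calc (∑ F : Fin (a+1) → Fin n, ∑ G : Fin b → Fin n,
        ((-1 : ℝ) ^ (l : ℕ)) * μ ((fun i => bas (F i)) ∘ l.succAbove)
            (Fin.cons (bas (F l)) (fun i => bas (G i)))
          * ν (fun i => bas (F i)) (fun i => bas (G i)))
        = ∑ H : Fin (a+1) → Fin n, ∑ G : Fin b → Fin n,
            ((-1 : ℝ) ^ (l : ℕ)) * μ ((fun i => bas ((e1 H) i)) ∘ l.succAbove)
              (Fin.cons (bas ((e1 H) l)) (fun i => bas (G i)))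
            * ν (fun i => bas ((e1 H) i)) (fun i => bas (G i)) :=
          (Equiv.sum_comp e1 (fun F => ∑ G : Fin b → Fin n,
            ((-1 : ℝ) ^ (l : ℕ)) * μ ((fun i => bas (F i)) ∘ l.succAbove)
              (Fin.cons (bas (F l)) (fun i => bas (G i)))
            * ν (fun i => bas (F i)) (fun i => bas (G i)))).symm
      _ = ∑ H : Fin (a+1) → Fin n, ∑ G : Fin b → Fin n,
            μ (fun q => bas (H q.succ)) (Fin.cons (bas (H 0)) (fun i => bas (G i)))
            * ν (Fin.cons (bas (H 0)) (fun q => bas (H q.succ))) (fun i => bas (G i)) :=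
          Finset.sum_congr rfl fun H _ => key H
      _ = ∑ p : Fin n × (Fin a → Fin n), ∑ G : Fin b → Fin n,
            μ (fun q => bas (((Fin.consEquiv fun _ => Fin n) p) q.succ))
              (Fin.cons (bas (((Fin.consEquiv fun _ => Fin n) p) 0)) (fun i => bas (G i)))
            * ν (Fin.cons (bas (((Fin.consEquiv fun _ => Fin n) p) 0))
                (fun q => bas (((Fin.consEquiv fun _ => Fin n) p) q.succ)))
              (fun i => bas (G i)) :=
          (Equiv.sum_comp (Fin.consEquiv fun _ => Fin n) _).symm
      _ = QQ μ ν := by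
          rw [QQ, Fintype.sum_prod_type]
          refine Finset.sum_congr rfl fun c _ => Finset.sum_congr rfl fun f _ =>
            Finset.sum_congr rfl fun G _ => ?_
          have hz : ((Fin.consEquiv fun _ => Fin n) (c, f)) 0 = c := by simp [Fin.consEquiv]
          have hs : (fun q => bas (((Fin.consEquiv fun _ => Fin n) (c, f)) q.succ))
              = fun q => bas (f q) := by
            funext q; simp [Fin.consEquiv]
          rw [hz, hs]
  rw [Finset.sum_congr rfl fun l _ => step2 l, Finset.sum_const, Finset.card_univ,
    Fintype.card_fin, nsmul_eq_mul]
  push_cast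
  ring

theorem PP_comm {a b : ℕ} (μ ν : (V) [⋀^Fin a]→ₗ[ℝ] ((V) [⋀^Fin b]→ₗ[ℝ] ℝ)) :
    PP μ ν = PP ν μ := by
  rw [PP, PP]
  exact Finset.sum_congr rfl fun f _ => Finset.sum_congr rfl fun g _ => mul_comm _ _

theorem PP_flip {a b : ℕ} (μ ν : (V) [⋀^Fin a]→ₗ[ℝ] ((V) [⋀^Fin b]→ₗ[ℝ] ℝ)) :
    PP μ ν = PP (flipA μ) (flipA ν) := by
  rw [PP, PP, Finset.sum_comm]
  exact Finset.sum_congr rfl fun g _ => Finset.sum_congr rfl fun f _ => by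
    rw [flipA_apply, flipA_apply]

theorem QQ_flip {a b : ℕ} (μ : (V) [⋀^Fin a]→ₗ[ℝ] ((V) [⋀^Fin (b+1)]→ₗ[ℝ] ℝ))
    (ν : (V) [⋀^Fin (a+1)]→ₗ[ℝ] ((V) [⋀^Fin b]→ₗ[ℝ] ℝ)) :
    QQ (flipA ν) (flipA μ) = QQ μ ν := by
  rw [QQ, QQ]
  refine Finset.sum_congr rfl fun c _ => ?_
  rw [Finset.sum_comm]
  exact Finset.sum_congr rfl fun f _ => Finset.sum_congr rfl fun g _ => by
    rw [flipA_apply, flipA_apply, mul_comm]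

theorem A2 {a b : ℕ} (μ : (V) [⋀^Fin a]→ₗ[ℝ] ((V) [⋀^Fin (b+1)]→ₗ[ℝ] ℝ))
    (ν : (V) [⋀^Fin (a+1)]→ₗ[ℝ] ((V) [⋀^Fin b]→ₗ[ℝ] ℝ)) :
    PP μ (Ta ν) = ((b:ℝ)+1) * QQ μ ν := by
  have h1 : flipA (Ta ν) = Sa (flipA ν) := by
    rw [Ta, flipA_flipA]
  rw [PP_flip, h1, PP_comm, A1, QQ_flip]

theorem PP_smul_left {a b : ℕ} (c : ℝ) (μ ν : (V) [⋀^Fin a]→ₗ[ℝ] ((V) [⋀^Fin b]→ₗ[ℝ] ℝ)) :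
    PP (c • μ) ν = c * PP μ ν := by
  rw [PP, PP, Finset.mul_sum]
  refine Finset.sum_congr rfl fun f _ => ?_
  rw [Finset.mul_sum]
  refine Finset.sum_congr rfl fun g _ => ?_
  rw [AlternatingMap.smul_apply, AlternatingMap.smul_apply, smul_eq_mul]
  ring

theorem PP_smul_right {a b : ℕ} (c : ℝ) (μ ν : (V) [⋀^Fin a]→ₗ[ℝ] ((V) [⋀^Fin b]→ₗ[ℝ] ℝ)) :
    PP μ (c • ν) = c * PP μ ν := by
  rw [PP_comm, PP_smul_left, PP_comm]

theorem PP_self_nonneg {a b : ℕ} (μ : (V) [⋀^Fin a]→ₗ[ℝ] ((V) [⋀^Fin b]→ₗ[ℝ] ℝ)) :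
    0 ≤ PP μ μ := by
  refine Finset.sum_nonneg fun f _ => Finset.sum_nonneg fun g _ => mul_self_nonneg _

theorem eq_zero_of_PP_self_nonpos {a b : ℕ}
    (μ : (V) [⋀^Fin a]→ₗ[ℝ] ((V) [⋀^Fin b]→ₗ[ℝ] ℝ)) (h : PP μ μ ≤ 0) : μ = 0 := by
  have h0 : PP μ μ = 0 := le_antisymm h (PP_self_nonneg μ)
  have hcomp : ∀ f : Fin a → Fin n, ∀ g : Fin b → Fin n,
      μ (fun i => bas (f i)) (fun i => bas (g i)) = 0 := by
    intro f g
    have h1 : ∀ f ∈ (Finset.univ : Finset (Fin a → Fin n)),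
        (∑ g : Fin b → Fin n, μ (fun i => bas (f i)) (fun i => bas (g i))
          * μ (fun i => bas (f i)) (fun i => bas (g i))) = 0 := by
      rw [← Finset.sum_eq_zero_iff_of_nonneg
        (fun f _ => Finset.sum_nonneg fun g _ => mul_self_nonneg _)]
      exact h0
    have h2 := (Finset.sum_eq_zero_iff_of_nonneg (fun g _ => mul_self_nonneg
      (μ (fun i => bas (f i)) (fun i => bas (g i))))).mp
      (h1 f (Finset.mem_univ f)) g (Finset.mem_univ g)
    exact mul_self_eq_zero.mp h2
  apply Module.Basis.ext_alternating (bas (n := n))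
  intro f _
  apply Module.Basis.ext_alternating (bas (n := n))
  intro g _
  rw [hcomp f g]
  simp

theorem fd_alt {N : Type*} [AddCommGroup N] [Module ℝ N] [FiniteDimensional ℝ N] {r : ℕ} :
    FiniteDimensional ℝ ((V) [⋀^Fin r]→ₗ[ℝ] N) := by
  have hinj : Function.Injective
      (fun μ : (V) [⋀^Fin r]→ₗ[ℝ] N => μ.toMultilinearMap) := by
    intro μ ν h
    ext v
    have := congrArg (fun m => m v) h
    simpa using this
  exact FiniteDimensional.of_injective
    ({ toFun := fun μ => μ.toMultilinearMap,
       map_add' := fun _ _ => rfl,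
       map_smul' := fun _ _ => rfl } :
      ((V) [⋀^Fin r]→ₗ[ℝ] N) →ₗ[ℝ] MultilinearMap ℝ (fun _ : Fin r => (V)) N) hinj

noncomputable def TaLin {a b : ℕ} :
    ((V) [⋀^Fin (a+1)]→ₗ[ℝ] ((V) [⋀^Fin b]→ₗ[ℝ] ℝ)) →ₗ[ℝ]
      ((V) [⋀^Fin a]→ₗ[ℝ] ((V) [⋀^Fin (b+1)]→ₗ[ℝ] ℝ)) where
  toFun := Ta
  map_add' ν ρ := by
    ext v w
    rw [AlternatingMap.add_apply]
    show _ = Ta ν v w + Ta ρ v w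
    rw [Ta_apply, Ta_apply, Ta_apply, ← Finset.sum_add_distrib]
    refine Finset.sum_congr rfl fun j _ => ?_
    rw [AlternatingMap.add_apply, AlternatingMap.add_apply]
    ring
  map_smul' c ν := by
    ext v w
    show Ta (c • ν) v w = (c • Ta ν) v w
    rw [AlternatingMap.smul_apply, AlternatingMap.smul_apply, smul_eq_mul,
      Ta_apply, Ta_apply, Finset.mul_sum]
    refine Finset.sum_congr rfl fun j _ => ?_
    rw [AlternatingMap.smul_apply, AlternatingMap.smul_apply, smul_eq_mul]
    ring

theorem Ta_zero {a b : ℕ} : Ta (0 : (V) [⋀^Fin (a+1)]→ₗ[ℝ] ((V) [⋀^Fin b]→ₗ[ℝ] ℝ)) = 0 :=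
  (TaLin (n := n) (a := a) (b := b)).map_zero

theorem inj_aux0 {m' : ℕ} (μ : (V) [⋀^Fin 0]→ₗ[ℝ] ((V) [⋀^Fin (m'+1)]→ₗ[ℝ] ℝ))
    (h0 : Sa μ = 0) : μ = 0 := by
  ext v w
  have hC := C1₀ μ v w
  rw [h0, Ta_zero] at hC
  simp only [AlternatingMap.zero_apply] at hC ⊢
  have hne : ((m' : ℝ)+1) ≠ 0 := by positivity
  exact (mul_eq_zero.mp hC.symm).resolve_left hne

set_option maxHeartbeats 2000000 in
theorem inj_auxS {a m' : ℕ} (hkm : a + 1 ≤ m')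
    (μ : (V) [⋀^Fin (a+1)]→ₗ[ℝ] ((V) [⋀^Fin (m'+1)]→ₗ[ℝ] ℝ))
    (h0 : Sa μ = 0) : μ = 0 := by
  have hST : Sa (Ta μ) = (((a : ℝ)+1) - ((m' : ℝ)+1)) • μ := by
    ext v w
    have hC1 := C1 μ v w
    rw [h0, Ta_zero] at hC1
    simp only [AlternatingMap.zero_apply] at hC1
    rw [C2 μ v w, AlternatingMap.smul_apply, AlternatingMap.smul_apply, smul_eq_mul]
    linarith [hC1]
  have h1 : PP (Sa (Ta μ)) μ = ((a:ℝ)+1) * QQ (Ta μ) μ := A1 (Ta μ) μ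
  have h2 : PP (Ta μ) (Ta μ) = (((m'+1 : ℕ):ℝ)+1) * QQ (Ta μ) μ := A2 (Ta μ) μ
  have h3 : PP (Sa (Ta μ)) μ = (((a : ℝ)+1) - ((m' : ℝ)+1)) * PP μ μ := by
    rw [hST, PP_smul_left]
  have hQQnn : 0 ≤ QQ (Ta μ) μ := by
    have hTT := PP_self_nonneg (Ta μ)
    have hm2 : (0:ℝ) < ((m'+1 : ℕ):ℝ)+1 := by positivity
    nlinarith
  have hcast : ((a:ℝ)+1) ≤ (m' : ℝ) := by exact_mod_cast hkm
  have hPP : PP μ μ ≤ 0 := by nlinarith [PP_self_nonneg μ]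
  exact eq_zero_of_PP_self_nonpos μ hPP

theorem surj_aux0 {k : ℕ} (ν : (V) [⋀^Fin (k+1)]→ₗ[ℝ] ((V) [⋀^Fin 0]→ₗ[ℝ] ℝ))
    (h0 : Sa (Ta ν) = 0) : ν = 0 := by
  ext v w
  have hC := C2₀ ν v w
  rw [h0] at hC
  simp only [AlternatingMap.zero_apply] at hC ⊢
  have hne : ((k : ℝ)+1) ≠ 0 := by positivity
  exact (mul_eq_zero.mp hC.symm).resolve_left hne

set_option maxHeartbeats 2000000 in
theorem surj_auxS {k b : ℕ} (hmk : b + 1 ≤ k)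
    (ν : (V) [⋀^Fin (k+1)]→ₗ[ℝ] ((V) [⋀^Fin (b+1)]→ₗ[ℝ] ℝ))
    (h0 : Sa (Ta ν) = 0) : ν = 0 := by
  have hTS : Ta (Sa ν) = (((b : ℝ)+1) - ((k : ℝ)+1)) • ν := by
    ext v w
    have hC2 := C2 ν v w
    rw [h0] at hC2
    simp only [AlternatingMap.zero_apply] at hC2
    rw [C1 ν v w, AlternatingMap.smul_apply, AlternatingMap.smul_apply, smul_eq_mul]
    linarith [hC2]
  have h1 : PP (Sa ν) (Sa ν) = (((k+1 : ℕ):ℝ)+1) * QQ ν (Sa ν) := A1 ν (Sa ν)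
  have h2 : PP ν (Ta (Sa ν)) = ((b:ℝ)+1) * QQ ν (Sa ν) := A2 ν (Sa ν)
  have h3 : PP ν (Ta (Sa ν)) = (((b : ℝ)+1) - ((k : ℝ)+1)) * PP ν ν := by
    rw [hTS, PP_smul_right]
  have hQQnn : 0 ≤ QQ ν (Sa ν) := by
    have hSS := PP_self_nonneg (Sa ν)
    have hk2 : (0:ℝ) < ((k+1 : ℕ):ℝ)+1 := by positivity
    nlinarith
  have hcast : ((b:ℝ)+1) ≤ (k : ℝ) := by exact_mod_cast hmk
  have hPP : PP ν ν ≤ 0 := by nlinarith [PP_self_nonneg ν]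
  exact eq_zero_of_PP_self_nonpos ν hPP

set_option maxHeartbeats 2000000 in
set_option synthInstance.maxHeartbeats 400000 in
theorem stmt_12 (n k m' : ℕ) (hk : k < n) (hm : m' + 1 ≤ n)
    (s : (EuclideanSpace ℝ (Fin n)) [⋀^Fin k]→ₗ[ℝ]
           ((EuclideanSpace ℝ (Fin n)) [⋀^Fin (m' + 1)]→ₗ[ℝ] ℝ) →ₗ[ℝ]
         (EuclideanSpace ℝ (Fin n)) [⋀^Fin (k + 1)]→ₗ[ℝ]
           ((EuclideanSpace ℝ (Fin n)) [⋀^Fin m']→ₗ[ℝ] ℝ))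
    (hs : ∀ (μ : (EuclideanSpace ℝ (Fin n)) [⋀^Fin k]→ₗ[ℝ]
              ((EuclideanSpace ℝ (Fin n)) [⋀^Fin (m' + 1)]→ₗ[ℝ] ℝ))
        (v : Fin (k + 1) → EuclideanSpace ℝ (Fin n))
        (w : Fin m' → EuclideanSpace ℝ (Fin n)),
        s μ v w = ∑ l : Fin (k + 1),
          (-1 : ℝ) ^ (l : ℕ) * μ (fun j => v (l.succAbove j)) (Fin.cons (v l) w)) :
    (k ≤ m' → Function.Injective s) ∧ (m' ≤ k → Function.Surjective s) := by
  have hsSa : ∀ μ, s μ = Sa μ := by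
    intro μ
    ext v w
    rw [hs μ v w, Sa_apply]
    rfl
  constructor
  · intro hkm
    rw [injective_iff_map_eq_zero]
    intro μ hμ0
    have h0 : Sa μ = 0 := by rw [← hsSa μ]; exact hμ0
    match k, hkm, μ, h0 with
    | 0, _, μ, h0 => exact inj_aux0 μ h0
    | (a+1), hkm, μ, h0 => exact inj_auxS hkm μ h0
  · intro hmk
    haveI : FiniteDimensional ℝ ((EuclideanSpace ℝ (Fin n)) [⋀^Fin m']→ₗ[ℝ] ℝ) := fd_alt
    haveI : FiniteDimensional ℝ ((EuclideanSpace ℝ (Fin n)) [⋀^Fin (k+1)]→ₗ[ℝ]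
      ((EuclideanSpace ℝ (Fin n)) [⋀^Fin m']→ₗ[ℝ] ℝ)) := fd_alt
    have hEinj : Function.Injective (s ∘ₗ (TaLin (n := n) (a := k) (b := m'))) := by
      rw [injective_iff_map_eq_zero]
      intro ν hν
      have h0 : Sa (Ta ν) = 0 := by
        rw [← hsSa (Ta ν)]
        exact hν
      match m', hmk, ν, h0 with
      | 0, _, ν, h0 => exact surj_aux0 ν h0
      | (b+1), hmk, ν, h0 => exact surj_auxS hmk ν h0
    have hEsurj := (@LinearMap.injective_iff_surjective ℝ _ _ _ _ fd_alt (s ∘ₗ (TaLin (n := n) (a := k) (b := m')))).mp hEinj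
    intro w
    obtain ⟨ν, hν⟩ := hEsurj w
    exact ⟨TaLin ν, hν⟩
end

section
/- For integers n ≥ 1 and 0 ≤ k < n: if n − 2k − 1 ≥ 0 then the up operator U_k : W(n,k) → W(n,k+1) is injective, and if n − 2k − 1 ≤ 0 then U_k is surjective. -/
/-!
STATEMENT 13: the up operator `U_k : W(n,k) → W(n,k+1)` is injective if `n − 2k − 1 ≥ 0`
and surjective if `n − 2k − 1 ≤ 0`.
-/

/-- `W(n,k)`: real-valued functions on the `k`-element subsets of `{1,…,n}`. -/
def Wsp (n k : ℕ) : Type := {s : Finset (Fin n) // s.card = k} → ℝ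

/-- The up operator `U_k : W(n,k) → W(n,k+1)`, `(U_k f)(J) = ∑_{j ∈ J} f(J \ {j})`. -/
noncomputable def upOp (n k : ℕ) (f : Wsp n k) : Wsp n (k + 1) := fun J =>
  ∑ j ∈ J.1.attach, f ⟨J.1.erase j.1, by
    simp [Finset.card_erase_of_mem j.2, J.2]⟩

open Finset in
section
namespace UpAux

/-- extend a function on `k`-subsets to all finsets by zero. -/
noncomputable def ext {n k : ℕ} (f : Wsp n k) (s : Finset (Fin n)) : ℝ :=
  if h : s.card = k then f ⟨s, h⟩ else 0

lemma ext_apply {n k : ℕ} (f : Wsp n k) (s : Finset (Fin n)) (h : s.card = k) :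
    ext f s = f ⟨s, h⟩ := dif_pos h

noncomputable def downOp (n k : ℕ) (g : Wsp n (k + 1)) : Wsp n k := fun I =>
  ∑ j ∈ I.1ᶜ, ext g (insert j I.1)

noncomputable def crossOp (n k : ℕ) (f : Wsp n k) : Wsp n k := fun I =>
  ∑ j ∈ I.1ᶜ, ∑ i ∈ I.1, ext f (insert j (I.1.erase i))

lemma up_eq (n k : ℕ) (f : Wsp n k) (J : {s : Finset (Fin n) // s.card = k + 1}) :
    upOp n k f J = ∑ j ∈ J.1, ext f (J.1.erase j) := by
  rw [show (∑ j ∈ J.1, ext f (J.1.erase j))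
      = ∑ j ∈ J.1.attach, ext f (J.1.erase j.1) from (Finset.sum_attach _ _).symm]
  refine Finset.sum_congr rfl fun j _ => ?_
  rw [ext_apply f _ (by simp [Finset.card_erase_of_mem j.2, J.2])]

lemma down_up (n k : ℕ) (f : Wsp n k) (I : {s : Finset (Fin n) // s.card = k}) :
    downOp n k (upOp n k f) I = ((n : ℝ) - k) * f I + crossOp n k f I := by
  have hkn : k ≤ n := by
    have := Finset.card_le_univ I.1
    simpa [I.2] using this
  have step : ∀ j ∈ I.1ᶜ, ext (upOp n k f) (insert j I.1)
      = f I + ∑ i ∈ I.1, ext f (insert j (I.1.erase i)) := by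
    intro j hj
    have hj' : j ∉ I.1 := Finset.mem_compl.mp hj
    have hc : (insert j I.1).card = k + 1 := by
      rw [Finset.card_insert_of_notMem hj', I.2]
    rw [ext_apply _ _ hc, up_eq, Finset.sum_insert hj']
    congr 1
    · rw [Finset.erase_insert hj', ext_apply _ _ I.2]
    · refine Finset.sum_congr rfl fun i hi => ?_
      rw [Finset.erase_insert_of_ne (by rintro rfl; exact hj' hi)]
  unfold downOp crossOp
  rw [Finset.sum_congr rfl step, Finset.sum_add_distrib, Finset.sum_const,
    Finset.card_compl, I.2, nsmul_eq_mul]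
  simp [Nat.cast_sub hkn, Fintype.card_fin]

lemma up_down (n k : ℕ) (g : Wsp n (k + 1)) (J : {s : Finset (Fin n) // s.card = k + 1}) :
    upOp n k (downOp n k g) J = ((k : ℝ) + 1) * g J + crossOp n (k + 1) g J := by
  have step : ∀ i ∈ J.1, ext (downOp n k g) (J.1.erase i)
      = g J + ∑ j ∈ J.1ᶜ, ext g (insert j (J.1.erase i)) := by
    intro i hi
    have hc : (J.1.erase i).card = k := by
      simp [Finset.card_erase_of_mem hi, J.2]
    rw [ext_apply _ _ hc]
    show ∑ j ∈ (J.1.erase i)ᶜ, ext g (insert j (J.1.erase i)) = _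
    rw [Finset.compl_erase, Finset.sum_insert (by simp [hi])]
    congr 1
    rw [Finset.insert_erase hi, ext_apply _ _ J.2]
  rw [up_eq, Finset.sum_congr rfl step, Finset.sum_add_distrib, Finset.sum_const, J.2,
    nsmul_eq_mul]
  rw [show crossOp n (k+1) g J = ∑ i ∈ J.1, ∑ j ∈ J.1ᶜ, ext g (insert j (J.1.erase i)) from
    Finset.sum_comm]
  push_cast
  ring_nf

lemma adj (n k : ℕ) (f : Wsp n k) (g : Wsp n (k + 1)) :
    ∑ J : {s : Finset (Fin n) // s.card = k + 1}, upOp n k f J * g J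
      = ∑ I : {s : Finset (Fin n) // s.card = k}, f I * downOp n k g I := by
  simp_rw [up_eq, downOp, Finset.sum_mul, Finset.mul_sum]
  rw [Finset.sum_sigma', Finset.sum_sigma']
  refine Finset.sum_bij'
    (fun a ha => (⟨⟨a.1.1.erase a.2, by
      have : a.2 ∈ a.1.1 := (Finset.mem_sigma.mp ha).2
      simp [Finset.card_erase_of_mem this, a.1.2]⟩, a.2⟩ :
      Σ _ : {s : Finset (Fin n) // s.card = k}, Fin n))
    (fun b hb => (⟨⟨insert b.2 b.1.1, by
      have : b.2 ∉ b.1.1 := Finset.mem_compl.mp (Finset.mem_sigma.mp hb).2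
      rw [Finset.card_insert_of_notMem this, b.1.2]⟩, b.2⟩ :
      Σ _ : {s : Finset (Fin n) // s.card = k + 1}, Fin n))
    ?_ ?_ ?_ ?_ ?_
  · intro a ha
    have : a.2 ∈ a.1.1 := (Finset.mem_sigma.mp ha).2
    simp [Finset.mem_sigma, Finset.notMem_erase]
  · intro b hb
    simp [Finset.mem_sigma, Finset.mem_insert_self]
  · intro a ha
    have h2 : a.2 ∈ a.1.1 := (Finset.mem_sigma.mp ha).2
    obtain ⟨J, j⟩ := a
    simp only at h2 ⊢
    congr 1
    exact Subtype.ext (Finset.insert_erase h2)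
  · intro b hb
    have h2 : b.2 ∉ b.1.1 := Finset.mem_compl.mp (Finset.mem_sigma.mp hb).2
    obtain ⟨I, j⟩ := b
    simp only at h2 ⊢
    congr 1
    exact Subtype.ext (Finset.erase_insert h2)
  · intro a ha
    have h2 : a.2 ∈ a.1.1 := (Finset.mem_sigma.mp ha).2
    simp only
    rw [ext_apply f _ (by simp [Finset.card_erase_of_mem h2, a.1.2]),
      Finset.insert_erase h2, ext_apply g _ a.1.2]

lemma normUp (n k : ℕ) (f : Wsp n k) :
    ∑ J : {s : Finset (Fin n) // s.card = k + 1}, upOp n k f J * upOp n k f J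
      = ((n : ℝ) - k) * (∑ I, f I * f I) + ∑ I, crossOp n k f I * f I := by
  rw [adj]
  simp_rw [down_up, mul_add]
  rw [Finset.sum_add_distrib, Finset.mul_sum]
  congr 1
  · exact Finset.sum_congr rfl fun I _ => by ring
  · exact Finset.sum_congr rfl fun I _ => mul_comm _ _

lemma normDown (n k : ℕ) (g : Wsp n (k + 1)) :
    ∑ I : {s : Finset (Fin n) // s.card = k}, downOp n k g I * downOp n k g I
      = ((k : ℝ) + 1) * (∑ J, g J * g J) + ∑ J, crossOp n (k + 1) g J * g J := by
  have h := adj n k (downOp n k g) g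
  simp_rw [up_down, add_mul] at h
  rw [← h, Finset.sum_add_distrib, Finset.mul_sum]
  congr 1
  exact Finset.sum_congr rfl fun I _ => by ring

lemma keyE (n k : ℕ) (g : Wsp n (k + 1)) :
    ∑ J : {s : Finset (Fin n) // s.card = k + 2}, upOp n (k + 1) g J * upOp n (k + 1) g J
      = (∑ I : {s : Finset (Fin n) // s.card = k}, downOp n k g I * downOp n k g I)
        + ((n : ℝ) - 2 * k - 2) * ∑ J, g J * g J := by
  rw [normUp n (k + 1) g, normDown n k g]
  push_cast
  ring

lemma lowerBound (n k : ℕ) (f : Wsp n k) :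
    ((n : ℝ) - 2 * k) * ∑ I, f I * f I
      ≤ ∑ J : {s : Finset (Fin n) // s.card = k + 1}, upOp n k f J * upOp n k f J := by
  cases k with
  | zero =>
    rw [normUp]
    have hcross : ∀ I : {s : Finset (Fin n) // s.card = 0}, crossOp n 0 f I = 0 := by
      intro I
      have : I.1 = ∅ := Finset.card_eq_zero.mp I.2
      simp [crossOp, this]
    simp only [hcross, zero_mul, Finset.sum_const_zero, add_zero]
    norm_num
  | succ m =>
    rw [keyE n m f]
    have h1 : (0:ℝ) ≤ ∑ I : {s : Finset (Fin n) // s.card = m},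
        downOp n m f I * downOp n m f I :=
      Finset.sum_nonneg fun I _ => mul_self_nonneg _
    have : ((n : ℝ) - 2 * (m + 1)) * ∑ J, f J * f J
        = ((n : ℝ) - 2 * m - 2) * ∑ J, f J * f J := by ring
    push_cast
    linarith

lemma sum_sq_zero {n k : ℕ} (f : Wsp n k)
    (h : ∑ I : {s : Finset (Fin n) // s.card = k}, f I * f I = 0) : ∀ I, f I = 0 := by
  intro I
  have := (Finset.sum_eq_zero_iff_of_nonneg
    (fun i _ => mul_self_nonneg (f i))).mp h I (Finset.mem_univ I)
  exact mul_self_eq_zero.mp this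

end UpAux

namespace UpAux

lemma up_sub (n k : ℕ) (f g : Wsp n k)
    (J : {s : Finset (Fin n) // s.card = k + 1}) :
    upOp n k (fun I => f I - g I) J = upOp n k f J - upOp n k g J := by
  unfold upOp
  rw [← Finset.sum_sub_distrib]

lemma down_inj (n k : ℕ) (hn : (n : ℝ) ≤ 2 * k + 1) (g : Wsp n (k + 1))
    (h : ∀ I, downOp n k g I = 0) : ∀ J, g J = 0 := by
  have hE := keyE n k g
  have hDsum : ∑ I : {s : Finset (Fin n) // s.card = k},
      downOp n k g I * downOp n k g I = 0 :=
    Finset.sum_eq_zero fun I _ => by rw [h I]; ring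
  rw [hDsum, zero_add] at hE
  have h1 : (0:ℝ) ≤ ∑ J' : {s : Finset (Fin n) // s.card = k + 2},
      upOp n (k+1) g J' * upOp n (k+1) g J' :=
    Finset.sum_nonneg fun _ _ => mul_self_nonneg _
  have h2 : (0:ℝ) ≤ ∑ J' : {s : Finset (Fin n) // s.card = k + 1}, g J' * g J' :=
    Finset.sum_nonneg fun _ _ => mul_self_nonneg _
  have h3 : ∑ J' : {s : Finset (Fin n) // s.card = k + 1}, g J' * g J' = 0 := by
    nlinarith [hE, h1, h2, hn]
  exact sum_sq_zero g h3

noncomputable def Ulin (n k : ℕ) :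
    EuclideanSpace ℝ {s : Finset (Fin n) // s.card = k} →ₗ[ℝ]
      EuclideanSpace ℝ {s : Finset (Fin n) // s.card = k + 1} where
  toFun f := WithLp.toLp 2 (upOp n k f.ofLp)
  map_add' f g := by
    ext J
    show upOp n k (fun I => f I + g I) J = upOp n k f.ofLp J + upOp n k g.ofLp J
    unfold upOp
    rw [← Finset.sum_add_distrib]
  map_smul' c f := by
    ext J
    show upOp n k (fun I => c * f I) J = c * upOp n k f.ofLp J
    unfold upOp
    rw [Finset.mul_sum]

end UpAux


end

open UpAux in
theorem stmt_13 (n k : ℕ) (hn : 1 ≤ n) (hk : k < n) :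
    ((0 : ℤ) ≤ (n : ℤ) - 2 * k - 1 → Function.Injective (upOp n k)) ∧
      ((n : ℤ) - 2 * k - 1 ≤ 0 → Function.Surjective (upOp n k)) := by
  constructor
  · intro hpos f g hfg
    have h2k : ((2:ℝ) * k + 1) ≤ n := by
      have : (2 * (k:ℤ) + 1) ≤ n := by omega
      exact_mod_cast this
    set d : Wsp n k := fun I => f I - g I with hd
    have hupd : ∀ J, upOp n k d J = 0 := by
      intro J
      rw [hd, up_sub, hfg, sub_self]
    have hlb := lowerBound n k d
    have hU0 : ∑ J : {s : Finset (Fin n) // s.card = k + 1},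
        upOp n k d J * upOp n k d J = 0 :=
      Finset.sum_eq_zero fun J _ => by rw [hupd J]; ring
    rw [hU0] at hlb
    have h2 : (0:ℝ) ≤ ∑ I : {s : Finset (Fin n) // s.card = k}, d I * d I :=
      Finset.sum_nonneg fun _ _ => mul_self_nonneg _
    have h3 : ∑ I : {s : Finset (Fin n) // s.card = k}, d I * d I = 0 := by
      nlinarith [hlb, h2, h2k]
    funext I
    have := sum_sq_zero d h3 I
    exact sub_eq_zero.mp this
  · intro hneg
    have hn2 : (n : ℝ) ≤ 2 * k + 1 := by
      have : (n:ℤ) ≤ 2 * k + 1 := by omega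
      exact_mod_cast this
    have hr : LinearMap.range (Ulin n k) = ⊤ := by
      rw [← Submodule.orthogonal_eq_bot_iff, Submodule.eq_bot_iff]
      intro g hg
      have hinner := (Submodule.mem_orthogonal _ g).mp hg
        (Ulin n k (WithLp.toLp 2 (downOp n k g.ofLp))) (LinearMap.mem_range_self _ _)
      have hinner' : ∑ I : {s : Finset (Fin n) // s.card = k},
          downOp n k g.ofLp I * downOp n k g.ofLp I = 0 := by
        rw [← adj n k (downOp n k g.ofLp) g.ofLp]
        rw [← hinner]
        simp [PiLp.inner_apply, RCLike.inner_apply, conj_trivial]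
        refine Finset.sum_congr rfl fun x _ => ?_
        rw [mul_comm]
        rfl
      have hdz : ∀ I, downOp n k g.ofLp I = 0 := by
        intro I
        exact mul_self_eq_zero.mp ((Finset.sum_eq_zero_iff_of_nonneg
          (fun i _ => mul_self_nonneg _)).mp hinner' I (Finset.mem_univ I))
      have := down_inj n k hn2 g.ofLp hdz
      ext J
      exact this J
    have hsurj : Function.Surjective (Ulin n k) := LinearMap.range_eq_top.mp hr
    intro y
    obtain ⟨x, hx⟩ := hsurj (WithLp.toLp 2 y)
    exact ⟨x.ofLp, congrArg WithLp.ofLp hx⟩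
end

section
/- Under the stated hypotheses, Y admits the Hodge decomposition Y = ran D ⊕ 𝔥 ⊕ ran (D')* as an orthogonal direct sum of closed subspaces; in particular ker D' = ran D ⊕ 𝔥 orthogonally, and the orthogonal complement of ker D' in Y equals ran (D')*. -/
open LinearPMap

/-- The kernel of a closed operator (viewed inside the ambient space) is closed. -/
lemma ker_isClosed_aux {Y Zc : Type*}
    [NormedAddCommGroup Y] [InnerProductSpace ℝ Y]
    [NormedAddCommGroup Zc] [InnerProductSpace ℝ Zc]
    (D' : Y →ₗ.[ℝ] Zc) (hD'closed : D'.IsClosed) :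
    IsClosed (((LinearMap.ker D'.toFun).map D'.domain.subtype : Submodule ℝ Y) : Set Y) := by
  have hset : (((LinearMap.ker D'.toFun).map D'.domain.subtype : Submodule ℝ Y) : Set Y)
      = (fun y : Y => (y, (0 : Zc))) ⁻¹' (D'.graph : Set (Y × Zc)) := by
    ext y
    constructor
    · rintro ⟨u, hu, rfl⟩
      have h0 : D' u = 0 := LinearMap.mem_ker.mp hu
      have : ((u : Y), D' u) ∈ D'.graph := D'.mem_graph u
      show ((u : Y), (0 : Zc)) ∈ D'.graph
      rwa [h0] at this
    · intro hy
      rcases (D'.mem_graph_iff.mp hy) with ⟨u, hu1, hu2⟩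
      exact ⟨u, LinearMap.mem_ker.mpr hu2, hu1⟩
  rw [hset]
  exact hD'closed.preimage (continuous_id.prodMk continuous_const)

/-- Closed range theorem direction needed: `(ker D')ᗮ = ran (D')*`. -/
lemma ortho_ker_eq_range_adjoint_aux {Y Zc : Type*}
    [NormedAddCommGroup Y] [InnerProductSpace ℝ Y] [CompleteSpace Y]
    [NormedAddCommGroup Zc] [InnerProductSpace ℝ Zc] [CompleteSpace Zc]
    (D' : Y →ₗ.[ℝ] Zc) (hD'dense : Dense (D'.domain : Set Y))
    (hD'closed : D'.IsClosed)
    (hranD'cl : IsClosed ((LinearMap.range D'.toFun : Submodule ℝ Zc) : Set Zc)) :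
    ((LinearMap.ker D'.toFun).map D'.domain.subtype)ᗮ
      = LinearMap.range D'.adjoint.toFun := by
  apply le_antisymm
  · -- hard direction: `w ⟂ ker D'` implies `w ∈ ran (D')*`.
    intro w hw
    haveI : CompleteSpace D'.graph := hD'closed.completeSpace_coe
    set Rng : Submodule ℝ Zc := LinearMap.range D'.toFun with hRng
    haveI : CompleteSpace Rng := hranD'cl.completeSpace_coe
    -- the surjective bounded map from the graph onto the range
    have hmem : ∀ p : D'.graph, ((p : Y × Zc).2) ∈ Rng := by
      rintro ⟨p, hp⟩
      rcases D'.mem_graph_iff.mp hp with ⟨u, _, hu2⟩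
      exact ⟨u, hu2⟩
    let T : D'.graph →L[ℝ] Rng :=
      ((ContinuousLinearMap.snd ℝ Y Zc).comp D'.graph.subtypeL).codRestrict Rng hmem
    have hTapply : ∀ p : D'.graph, ((T p : Zc)) = (p : Y × Zc).2 := fun p => rfl
    have hTsurj : Function.Surjective T := by
      rintro ⟨v, hv⟩
      rcases hv with ⟨u, hu⟩
      refine ⟨⟨((u : Y), v), ?_⟩, ?_⟩
      · exact D'.mem_graph_iff.mpr ⟨u, rfl, hu⟩
      · exact Subtype.ext rfl
    -- the functional `φ (u, D'u) = ⟪w, u⟫` on the graph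
    let φ : D'.graph →L[ℝ] ℝ :=
      (innerSL ℝ w).comp ((ContinuousLinearMap.fst ℝ Y Zc).comp D'.graph.subtypeL)
    have hφapply : ∀ p : D'.graph, φ p = inner ℝ w (p : Y × Zc).1 := fun p => rfl
    have hker : LinearMap.ker (T : D'.graph →ₗ[ℝ] Rng) ≤ LinearMap.ker (φ : D'.graph →ₗ[ℝ] ℝ) := by
      intro p hp
      have hp2 : ((p : Y × Zc).2) = 0 := by
        have := congrArg (Subtype.val) (LinearMap.mem_ker.mp hp)
        simpa [hTapply] using this
      rcases D'.mem_graph_iff.mp p.2 with ⟨u, hu1, hu2⟩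
      have humem : (p : Y × Zc).1 ∈ (LinearMap.ker D'.toFun).map D'.domain.subtype :=
        ⟨u, LinearMap.mem_ker.mpr (hu2.trans hp2), hu1⟩
      have : inner ℝ ((p : Y × Zc).1) w = (0 : ℝ) :=
        (Submodule.mem_orthogonal _ w).mp hw _ humem
      simpa [LinearMap.mem_ker, hφapply, real_inner_comm] using this
    -- factor φ through T
    let e := LinearMap.quotKerEquivOfSurjective (T : D'.graph →ₗ[ℝ] Rng) hTsurj
    let g : Rng →ₗ[ℝ] ℝ :=
      ((LinearMap.ker (T : D'.graph →ₗ[ℝ] Rng)).liftQ (φ : D'.graph →ₗ[ℝ] ℝ) hker).comp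
        (e.symm.toLinearMap)
    have hg : ∀ p : D'.graph, g (T p) = φ p := by
      intro p
      have he : e (Submodule.Quotient.mk p) = T p := rfl
      have : (e.symm.toLinearMap) (T p) = Submodule.Quotient.mk p := by
        rw [← he]; exact e.symm_apply_apply _
      simp only [g, LinearMap.comp_apply, this, Submodule.liftQ_apply]; rfl
    -- boundedness via the open mapping theorem
    obtain ⟨C, Cpos, hC⟩ := T.exists_preimage_norm_le hTsurj
    have hbound : ∀ v : Rng, ‖g v‖ ≤ (C * ‖w‖) * ‖v‖ := by
      intro v
      obtain ⟨p, hp, hpnorm⟩ := hC v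
      have hgv : g v = inner ℝ w (p : Y × Zc).1 := by rw [← hp, hg p, hφapply]
      rw [hgv]
      have h1 : ‖(inner ℝ w (p : Y × Zc).1 : ℝ)‖ ≤ ‖w‖ * ‖(p : Y × Zc).1‖ :=
        norm_inner_le_norm _ _
      have h2 : ‖(p : Y × Zc).1‖ ≤ ‖p‖ := norm_fst_le (p : Y × Zc)
      have h3 : ‖p‖ ≤ C * ‖v‖ := hpnorm
      calc ‖(inner ℝ w (p : Y × Zc).1 : ℝ)‖ ≤ ‖w‖ * ‖(p : Y × Zc).1‖ := h1
        _ ≤ ‖w‖ * (C * ‖v‖) := by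
            have := h2.trans h3
            nlinarith [norm_nonneg w]
        _ = (C * ‖w‖) * ‖v‖ := by ring
    let gC : Rng →L[ℝ] ℝ := g.mkContinuous (C * ‖w‖) hbound
    -- Riesz representation
    let z₀ : Rng := (InnerProductSpace.toDual ℝ Rng).symm gC
    have hz : ∀ u : D'.domain, (inner ℝ w (u : Y) : ℝ) = inner ℝ ((z₀ : Zc)) (D' u) := by
      intro u
      have hv : D' u ∈ Rng := ⟨u, rfl⟩
      set v : Rng := ⟨D' u, hv⟩ with hvdef
      have hp : ((u : Y), D' u) ∈ D'.graph := D'.mem_graph u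
      set p : D'.graph := ⟨((u : Y), D' u), hp⟩ with hpdef
      have hTp : T p = v := Subtype.ext rfl
      have h1 : (inner ℝ ((z₀ : Zc)) (D' u) : ℝ) = inner ℝ z₀ v := by
        rw [Submodule.coe_inner]
      have h2 : (inner ℝ z₀ v : ℝ) = gC v := InnerProductSpace.toDual_symm_apply
      have h3 : gC v = g v := rfl
      rw [h1, h2, h3, ← hTp, hg p, hφapply]
    have hzdom : (z₀ : Zc) ∈ D'.adjoint.domain :=
      mem_adjoint_domain_of_exists _ ⟨w, fun u => hz u⟩
    refine ⟨⟨(z₀ : Zc), hzdom⟩, ?_⟩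
    exact adjoint_apply_eq hD'dense _ fun u => hz u
  · -- easy direction
    rintro w ⟨z, rfl⟩
    rw [Submodule.mem_orthogonal]
    rintro u ⟨u', hu', rfl⟩
    have h1 : (inner ℝ (D'.adjoint z) ((u' : Y)) : ℝ) = inner ℝ (z : Zc) (D' u') :=
      adjoint_isFormalAdjoint hD'dense z u'
    have h2 : D' u' = 0 := LinearMap.mem_ker.mp hu'
    have key : (inner ℝ ((u' : Y)) (D'.adjoint.toFun z) : ℝ) = 0 := by
      rw [real_inner_comm]
      calc (inner ℝ (D'.adjoint z) ((u' : Y)) : ℝ) = inner ℝ (z : Zc) (D' u') := h1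
        _ = 0 := by rw [h2, inner_zero_right]
    exact key

theorem stmt_15
    (X Y Zc : Type*)
    [NormedAddCommGroup X] [InnerProductSpace ℝ X] [CompleteSpace X]
    [NormedAddCommGroup Y] [InnerProductSpace ℝ Y] [CompleteSpace Y]
    [NormedAddCommGroup Zc] [InnerProductSpace ℝ Zc] [CompleteSpace Zc]
    (D : X →ₗ.[ℝ] Y) (D' : Y →ₗ.[ℝ] Zc)
    (hDdense : Dense (D.domain : Set X))
    (hD'dense : Dense (D'.domain : Set Y))
    (hDclosed : D.IsClosed) (hD'closed : D'.IsClosed)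
    -- `ran D ⊆ ker D'`
    (hcompl : LinearMap.range D.toFun ≤ (LinearMap.ker D'.toFun).map D'.domain.subtype)
    -- `ran D` and `ran D'` are closed
    (hranDcl : IsClosed ((LinearMap.range D.toFun : Submodule ℝ Y) : Set Y))
    (hranD'cl : IsClosed ((LinearMap.range D'.toFun : Submodule ℝ Zc) : Set Zc)) :
    -- notation: `R = ran D`, `Kk = ker D'`, `A = ran (D')*`, `Hh = 𝔥 = Kk ⊓ Rᗮ`
    ∀ R Kk A Hh : Submodule ℝ Y,
      R = LinearMap.range D.toFun →
      Kk = (LinearMap.ker D'.toFun).map D'.domain.subtype →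
      A = LinearMap.range D'.adjoint.toFun →
      Hh = Kk ⊓ Rᗮ →
      -- the three pieces are closed,
      (IsClosed (R : Set Y) ∧ IsClosed (Hh : Set Y) ∧ IsClosed (A : Set Y)) ∧
      -- mutually orthogonal,
      (R ≤ Hhᗮ ∧ R ≤ Aᗮ ∧ Hh ≤ Aᗮ) ∧
      -- and they span `Y`:
      R ⊔ Hh ⊔ A = ⊤ ∧
      -- in particular `ker D' = ran D ⊕ 𝔥` orthogonally
      (Kk = R ⊔ Hh ∧ R ≤ Hhᗮ) ∧
      -- and the orthogonal complement of `ker D'` is `ran (D')*`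
      Kkᗮ = A := by
  intro R Kk A Hh hR hKk hA hHh
  subst hR hKk hA hHh
  set R : Submodule ℝ Y := LinearMap.range D.toFun with hR
  set Kk : Submodule ℝ Y := (LinearMap.ker D'.toFun).map D'.domain.subtype with hKk
  set A : Submodule ℝ Y := LinearMap.range D'.adjoint.toFun with hA
  -- key facts
  have hKA : Kkᗮ = A := ortho_ker_eq_range_adjoint_aux D' hD'dense hD'closed hranD'cl
  have hKkcl : IsClosed (Kk : Set Y) := ker_isClosed_aux D' hD'closed
  have hRK : R ≤ Kk := hcompl
  haveI : CompleteSpace R := hranDcl.completeSpace_coe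
  haveI : CompleteSpace Kk := hKkcl.completeSpace_coe
  have hRHh : (Kk ⊓ Rᗮ : Submodule ℝ Y) ≤ Rᗮ := inf_le_right
  have hRleHo : R ≤ (Kk ⊓ Rᗮ)ᗮ :=
    le_trans R.le_orthogonal_orthogonal (Submodule.orthogonal_le hRHh)
  have hKsup : Kk = R ⊔ Kk ⊓ Rᗮ := by
    have h := Submodule.sup_orthogonal_inf_of_hasOrthogonalProjection hRK
    rw [inf_comm]
    exact h.symm
  refine ⟨⟨hranDcl, ?_, ?_⟩, ⟨hRleHo, ?_, ?_⟩, ?_, ⟨hKsup, hRleHo⟩, hKA⟩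
  · -- Hh closed
    have : ((Kk ⊓ Rᗮ : Submodule ℝ Y) : Set Y) = (Kk : Set Y) ∩ (Rᗮ : Set Y) := rfl
    rw [this]
    exact hKkcl.inter R.isClosed_orthogonal
  · -- A closed
    rw [← hKA]
    exact Kk.isClosed_orthogonal
  · -- R ≤ Aᗮ
    rw [← hKA]
    exact le_trans hRK Kk.le_orthogonal_orthogonal
  · -- Hh ≤ Aᗮ
    rw [← hKA]
    exact le_trans inf_le_left Kk.le_orthogonal_orthogonal
  · -- span
    rw [← hKsup, ← hKA]
    exact Submodule.sup_orthogonal_of_hasOrthogonalProjection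
end

section
/- For every k ∈ ℤ, ker(D^k) ∩ HW^k = D^{k−1}(HW^{k−1}) ⊕ G^k as an internal direct sum of subspaces of M^k; that is, the spaces G^k represent the cohomology of the domain complex (HW^•, D^•) as well. -/
/-!
STATEMENT 16: the uniform cohomology representatives `G^k` also represent the cohomology of
the domain complex `(HW^•, D^•)`:  `ker(D^k) ∩ HW^k = D^{k-1}(HW^{k-1}) ⊕ G^k` for every `k ∈ ℤ`
(stated at the position `k+1`, which ranges over all of `ℤ`).
-/

theorem stmt_16
    (M : ℤ → Type*) [∀ k, AddCommGroup (M k)] [∀ k, Module ℝ (M k)]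
    (D : ∀ k : ℤ, M k →ₗ[ℝ] M (k + 1))
    (hDD : ∀ (k : ℤ) (x : M k), D (k + 1) (D k x) = 0)
    (Zs : ∀ k : ℤ, ℝ → Submodule ℝ (M k))
    (hmono : ∀ (k : ℤ) (q q' : ℝ), q ≤ q' → Zs k q' ≤ Zs k q)
    (γ : ℤ → ℝ) (hγ : ∀ k, 1 ≤ γ k)
    (hDZ : ∀ (k : ℤ) (q : ℝ), (Zs k q).map (D k) ≤ Zs (k + 1) (q - γ k))
    (G : ∀ k : ℤ, Submodule ℝ (M k))
    (hGfin : ∀ k, FiniteDimensional ℝ (G k))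
    (hGsub : ∀ (k : ℤ) (q : ℝ), G k ≤ Zs k q)
    -- uniform representation of cohomology
    (hrep : ∀ (k : ℤ) (q : ℝ),
      LinearMap.ker (D (k + 1)) ⊓ Zs (k + 1) q = (Zs k (q + γ k)).map (D k) ⊔ G (k + 1)
        ∧ Disjoint ((Zs k (q + γ k)).map (D k)) (G (k + 1))) :
    ∀ k : ℤ,
      LinearMap.ker (D (k + 1)) ⊓ (Zs (k + 1) 0 ⊓ (Zs (k + 1 + 1) 0).comap (D (k + 1)))
          = ((Zs k 0 ⊓ (Zs (k + 1) 0).comap (D k)).map (D k)) ⊔ G (k + 1)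
        ∧ Disjoint ((Zs k 0 ⊓ (Zs (k + 1) 0).comap (D k)).map (D k)) (G (k + 1)) := by

  intro k
  have h0 := hrep k 0
  have hm := hrep k (-γ k)
  have e0 : (0 : ℝ) + γ k = γ k := by ring
  have em : (-γ k) + γ k = 0 := by ring
  rw [e0] at h0
  rw [em] at hm
  -- key: D(HW^k) = D(Z^k_{γ k})
  have hmap : ((Zs k 0 ⊓ (Zs (k + 1) 0).comap (D k)).map (D k))
      = (Zs k (γ k)).map (D k) := by
    apply le_antisymm
    · rintro y ⟨u, ⟨hu0, huD⟩, rfl⟩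
      -- D u ∈ ker D^{k+1} ∩ Z^{k+1}_0
      have hker : D k u ∈ LinearMap.ker (D (k + 1)) := by
        simp [LinearMap.mem_ker, hDD k u]
      have hmem : D k u ∈ (Zs k (γ k)).map (D k) ⊔ G (k + 1) := by
        rw [← h0.1]; exact ⟨hker, huD⟩
      obtain ⟨a, ha, g, hg, hag⟩ := Submodule.mem_sup.mp hmem
      obtain ⟨z, hz, rfl⟩ := ha
      have hz0 : z ∈ Zs k 0 := hmono k 0 (γ k) (le_trans zero_le_one (hγ k)) hz
      have hgz : g = D k (u - z) := by
        rw [map_sub]; rw [← hag]; abel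
      have hgZ : g ∈ (Zs k 0).map (D k) := ⟨u - z, sub_mem hu0 hz0, hgz.symm⟩
      have hg0 : g = 0 := by
        have := hm.2
        exact (Submodule.disjoint_def.mp this) g hgZ hg
      refine ⟨z, hz, ?_⟩
      rw [hg0, add_zero] at hag; exact hag
    · rintro y ⟨z, hz, rfl⟩
      refine ⟨z, ⟨hmono k 0 (γ k) (le_trans zero_le_one (hγ k)) hz, ?_⟩, rfl⟩
      have := hDZ k (γ k) ⟨z, hz, rfl⟩
      simpa using hmono (k+1) 0 (γ k - γ k) (by simp) this
  constructor
  · apply le_antisymm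
    · rintro x ⟨hk, hx0, _⟩
      rw [hmap, ← h0.1]; exact ⟨hk, hx0⟩
    · intro x hx
      rw [hmap, ← h0.1] at hx
      obtain ⟨hk, hx0⟩ := hx
      have : D (k+1) x = 0 := hk
      exact ⟨hk, hx0, by simp [Submodule.mem_comap, this]⟩
  · rw [hmap]; exact h0.2
end

section
/- (Regular decomposition.) For every k ∈ ℤ, HW^k = D^{k−1}(Z^{k−1}_{γ_{k−1}}) + Z^k_{γ_k} as subspaces of M^k: every w ∈ HW^k can be written w = D^{k−1} y + z with y ∈ Z^{k−1}_{γ_{k−1}} and z ∈ Z^k_{γ_k}, and conversely both summands are contained in HW^k. -/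
/-!
STATEMENT 18 (Regular decomposition): for every `k ∈ ℤ`,
`HW^k = D^{k-1}(Z^{k-1}_{γ_{k-1}}) + Z^k_{γ_k}`  (stated at the position `k+1`, which
ranges over all of `ℤ`), where `HW^k = { u ∈ L^k : D^k u ∈ L^{k+1} }` and `L^k = Z^k_0`.
-/

theorem stmt_18
    (M : ℤ → Type*) [∀ k, AddCommGroup (M k)] [∀ k, Module ℝ (M k)]
    (D : ∀ k : ℤ, M k →ₗ[ℝ] M (k + 1))
    (hDD : ∀ (k : ℤ) (x : M k), D (k + 1) (D k x) = 0)
    (Zs : ∀ k : ℤ, ℝ → Submodule ℝ (M k))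
    (hmono : ∀ (k : ℤ) (q q' : ℝ), q ≤ q' → Zs k q' ≤ Zs k q)
    (γ : ℤ → ℝ) (hγ : ∀ k, 1 ≤ γ k)
    (hDZ : ∀ (k : ℤ) (q : ℝ), (Zs k q).map (D k) ≤ Zs (k + 1) (q - γ k))
    (G : ∀ k : ℤ, Submodule ℝ (M k))
    (hGfin : ∀ k, FiniteDimensional ℝ (G k))
    (hGsub : ∀ (k : ℤ) (q : ℝ), G k ≤ Zs k q)
    -- uniform representation of cohomology
    (hrep : ∀ (k : ℤ) (q : ℝ),
      LinearMap.ker (D (k + 1)) ⊓ Zs (k + 1) q = (Zs k (q + γ k)).map (D k) ⊔ G (k + 1)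
        ∧ Disjoint ((Zs k (q + γ k)).map (D k)) (G (k + 1))) :
    ∀ k : ℤ,
      Zs (k + 1) 0 ⊓ (Zs (k + 1 + 1) 0).comap (D (k + 1))
        = (Zs k (γ k)).map (D k) ⊔ Zs (k + 1) (γ (k + 1)) := by
  intro k
  have hγk0 : (0:ℝ) ≤ γ k := le_trans zero_le_one (hγ k)
  have hγk10 : (0:ℝ) ≤ γ (k+1) := le_trans zero_le_one (hγ (k+1))
  apply le_antisymm
  · rintro u ⟨hu0, hDu⟩
    have h1 : D (k+1) u ∈ LinearMap.ker (D (k+1+1)) ⊓ Zs (k+1+1) 0 :=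
      ⟨hDD (k+1) u, hDu⟩
    rw [(hrep (k+1) 0).1] at h1
    obtain ⟨w, hw, g, hg, hwg⟩ := Submodule.mem_sup.mp h1
    obtain ⟨v, hv, rfl⟩ := hw
    have hv0 : v ∈ Zs (k+1) 0 := hmono (k+1) 0 (0 + γ (k+1)) (by linarith) hv
    have hg0 : g = 0 := by
      have hmem : g ∈ (Zs (k+1) (-γ (k+1) + γ (k+1))).map (D (k+1)) := by
        refine ⟨u - v, ?_, ?_⟩
        · have he : (-γ (k+1) + γ (k+1)) = (0:ℝ) := by ring
          rw [he]
          exact sub_mem hu0 hv0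
        · rw [map_sub]
          rw [← hwg]
          abel
      have := ((hrep (k+1) (-γ (k+1))).2).le_bot ⟨hmem, hg⟩
      simpa using this
    have huv : u - v ∈ LinearMap.ker (D (k+1)) ⊓ Zs (k+1) 0 := by
      constructor
      · show D (k+1) (u - v) = 0
        rw [map_sub, ← hwg, hg0]; abel
      · exact sub_mem hu0 hv0
    rw [(hrep k 0).1] at huv
    obtain ⟨w', hw', h, hh, hwh⟩ := Submodule.mem_sup.mp huv
    obtain ⟨y, hy, rfl⟩ := hw'
    apply Submodule.mem_sup.mpr
    refine ⟨D k y, ⟨y, ?_, rfl⟩, h + v, ?_, ?_⟩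
    · exact hmono k (γ k) (0 + γ k) (by linarith) hy
    · exact add_mem (hGsub (k+1) (γ (k+1)) hh)
        (hmono (k+1) (γ (k+1)) (0 + γ (k+1)) (by linarith) hv)
    · have : u = (D k y + h) + v := by rw [hwh]; abel
      rw [this]; abel
  · apply sup_le
    · rintro x ⟨y, hy, rfl⟩
      have h1 : D k y ∈ Zs (k+1) (γ k - γ k) := hDZ k (γ k) ⟨y, hy, rfl⟩
      rw [sub_self] at h1
      refine ⟨h1, ?_⟩
      show D (k+1) (D k y) ∈ Zs (k+1+1) 0
      rw [hDD k y]; exact zero_mem _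
    · intro x hx
      refine ⟨hmono (k+1) 0 (γ (k+1)) hγk10 hx, ?_⟩
      have h2 : D (k+1) x ∈ Zs (k+1+1) (γ (k+1) - γ (k+1)) :=
        hDZ (k+1) (γ (k+1)) ⟨x, hx, rfl⟩
      rwa [sub_self] at h2
end
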